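/- arXiv:2008.06555 — 2 statements merged into one kernel-verified Lean document; each statement's English description precedes it below -/
import Mathlib

section
/- Under the sampling model, for all subsets π, π' ⊆ [n]: Var( μ̂_{π\π'} − μ̂_{π'\π} ) ≤ 4·|π Δ π'|·n/T, where Δ denotes symmetric difference. -/
open MeasureTheory ProbabilityTheory

/-- Under the i.i.d. sampling model, for all `π, π' ⊆ [n]`,
`Var( μ̂_{π\π'} − μ̂_{π'\π} ) ≤ 4·|π Δ π'|·n/T` where `Δ` is symmetric difference
and `μ̂_S = (n/T) Σ_s Y_s·1{I_s ∈ S}`. -/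
theorem stmt3 {Ω : Type*} [MeasureSpace Ω] [IsProbabilityMeasure (ℙ : Measure Ω)]
    (n T : ℕ) (hn : 1 ≤ n) (hT : 1 ≤ T)
    (I : Fin T → Ω → Fin n) (Y : Fin T → Ω → ℝ)
    (hImeas : ∀ s, Measurable (I s)) (hYmeas : ∀ s, Measurable (Y s))
    (hYbd : ∀ s ω, |Y s ω| ≤ 1)
    (μ : Fin n → ℝ) (hμ : ∀ i, μ i ∈ Set.Icc (-1 : ℝ) 1)
    (hindep : iIndepFun (fun s ω => (I s ω, Y s ω)) ℙ)
    (hident : ∀ s t : Fin T,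
      IdentDistrib (fun ω => (I s ω, Y s ω)) (fun ω => (I t ω, Y t ω)) ℙ ℙ)
    (hunif : ∀ (s : Fin T) (i : Fin n), ℙ {ω | I s ω = i} = (n : ENNReal)⁻¹)
    (hcond : ∀ (s : Fin T) (i : Fin n), (∫ ω in {ω | I s ω = i}, Y s ω) = μ i / n)
    (hvar : ∀ (s : Fin T) (i : Fin n),
      (∫ ω in {ω | I s ω = i}, (Y s ω) ^ 2) ≤ (1 + μ i ^ 2) / n)
    (π π' : Finset (Fin n)) :
    variance (fun ω =>
        ((n : ℝ) / T) * ∑ s, Y s ω * (if I s ω ∈ π \ π' then (1 : ℝ) else 0)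
        - ((n : ℝ) / T) * ∑ s, Y s ω * (if I s ω ∈ π' \ π then (1 : ℝ) else 0)) ℙ
      ≤ 4 * (symmDiff π π').card * n / T := by
  classical
  have hn' : (0:ℝ) < n := by exact_mod_cast hn
  have hT' : (0:ℝ) < T := by exact_mod_cast hT
  set Z : Fin T → Ω → ℝ := fun s ω => Y s ω *
      ((if I s ω ∈ π \ π' then (1:ℝ) else 0) - (if I s ω ∈ π' \ π then (1:ℝ) else 0)) with hZdef
  -- measurability of Z
  have hZmeas : ∀ s, Measurable (Z s) := by
    intro s
    apply (hYmeas s).mul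
    apply Measurable.sub
    · exact Measurable.ite ((hImeas s) (by measurability)) measurable_const measurable_const
    · exact Measurable.ite ((hImeas s) (by measurability)) measurable_const measurable_const
  -- boundedness of Z
  have hZbd : ∀ s ω, |Z s ω| ≤ 1 := by
    intro s ω
    simp only [hZdef]
    rw [abs_mul]
    have h1 : |Y s ω| ≤ 1 := hYbd s ω
    have h2 : |((if I s ω ∈ π \ π' then (1:ℝ) else 0)
        - (if I s ω ∈ π' \ π then (1:ℝ) else 0))| ≤ 1 := by
      split_ifs <;> norm_num
    calc |Y s ω| * |((if I s ω ∈ π \ π' then (1:ℝ) else 0)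
        - (if I s ω ∈ π' \ π then (1:ℝ) else 0))| ≤ 1 * 1 :=
        mul_le_mul h1 h2 (abs_nonneg _) zero_le_one
      _ = 1 := mul_one 1
  have hZmem : ∀ s, MemLp (Z s) 2 ℙ := fun s =>
    (memLp_top_of_bound (hZmeas s).aestronglyMeasurable 1
      (ae_of_all _ (hZbd s))).mono_exponent le_top
  -- independence of Z
  have hZindep : iIndepFun Z ℙ := by
    have hZeq : Z = fun s => (fun p : Fin n × ℝ =>
        p.2 * ((if p.1 ∈ π \ π' then (1:ℝ) else 0) - (if p.1 ∈ π' \ π then (1:ℝ) else 0)))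
        ∘ (fun ω => (I s ω, Y s ω)) := rfl
    rw [hZeq]
    exact hindep.comp _ (fun s => by
      apply measurable_snd.mul
      apply Measurable.sub
      · exact Measurable.ite (measurable_fst (by measurability)) measurable_const measurable_const
      · exact Measurable.ite (measurable_fst (by measurability)) measurable_const measurable_const)
  -- rewrite the goal function
  have hfun : (fun ω =>
        ((n : ℝ) / T) * ∑ s, Y s ω * (if I s ω ∈ π \ π' then (1 : ℝ) else 0)
        - ((n : ℝ) / T) * ∑ s, Y s ω * (if I s ω ∈ π' \ π then (1 : ℝ) else 0))
      = fun ω => ((n : ℝ) / T) * ∑ s, Z s ω := by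
    funext ω
    simp only [hZdef, mul_sub, Finset.sum_sub_distrib]
  rw [hfun, variance_const_mul]
  have hXsum : (fun ω => ∑ s, Z s ω) = ∑ s, Z s := by
    funext ω; rw [Finset.sum_apply]
  rw [hXsum]
  have hvs : variance (∑ s, Z s) ℙ = ∑ s, variance (Z s) ℙ :=
    IndepFun.variance_sum (fun s _ => hZmem s)
      (fun s _ t _ hst => hZindep.indepFun hst)
  rw [hvs]
  -- bound each variance
  have hZvar : ∀ s, variance (Z s) ℙ ≤ 2 * (symmDiff π π').card / n := by
    intro s
    refine (variance_le_expectation_sq (hZmeas s).aestronglyMeasurable).trans ?_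
    have hsq : ∀ ω, (Z s ω)^2 = ∑ i ∈ symmDiff π π', if I s ω = i then Y s ω ^ 2 else 0 := by
      intro ω
      rw [Finset.sum_ite_eq (symmDiff π π') (I s ω) (fun _ => Y s ω ^ 2)]
      have hΔ : (I s ω ∈ symmDiff π π') ↔ (I s ω ∈ π \ π' ∨ I s ω ∈ π' \ π) := by
        simp only [Finset.mem_symmDiff, Finset.mem_sdiff]
      simp only [hZdef]
      by_cases h1 : I s ω ∈ π \ π' <;> by_cases h2 : I s ω ∈ π' \ π
      · exfalso
        simp only [Finset.mem_sdiff] at h1 h2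
        exact h1.2 h2.1
      · rw [if_pos h1, if_neg h2, if_pos (hΔ.mpr (Or.inl h1))]; ring
      · rw [if_neg h1, if_pos h2, if_pos (hΔ.mpr (Or.inr h2))]; ring
      · rw [if_neg h1, if_neg h2, if_neg (fun h => (hΔ.mp h).elim h1 h2)]; ring
    have hint : ∀ i : Fin n, Integrable (fun ω => if I s ω = i then Y s ω ^ 2 else 0) ℙ := by
      intro i
      apply Integrable.mono' (integrable_const (1:ℝ))
      · apply Measurable.aestronglyMeasurable
        exact Measurable.ite ((hImeas s) (measurableSet_singleton i))
          ((hYmeas s).pow measurable_const) measurable_const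
      · refine ae_of_all _ fun ω => ?_
        split_ifs
        · rw [Real.norm_eq_abs, abs_of_nonneg (sq_nonneg _)]
          have h := hYbd s ω
          nlinarith [abs_nonneg (Y s ω), sq_abs (Y s ω)]
        · simp
    have hmsets : ∀ i : Fin n, MeasurableSet {ω | I s ω = i} :=
      fun i => (hImeas s) (measurableSet_singleton i)
    have hexp : ∫ ω, (Z s ω)^2 ∂ℙ
        = ∑ i ∈ symmDiff π π', ∫ ω in {ω | I s ω = i}, Y s ω ^ 2 := by
      rw [show (fun ω => Z s ω ^ 2)
          = fun ω => ∑ i ∈ symmDiff π π', if I s ω = i then Y s ω ^ 2 else 0 from funext hsq]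
      rw [integral_finset_sum _ (fun i _ => hint i)]
      refine Finset.sum_congr rfl fun i _ => ?_
      rw [← integral_indicator (hmsets i)]
      congr 1
      funext ω
      simp [Set.indicator_apply]
    have hgoal : ∫ ω, (Z s ω)^2 ∂ℙ ≤ 2 * (symmDiff π π').card / n := by
      rw [hexp]
      calc ∑ i ∈ symmDiff π π', ∫ ω in {ω | I s ω = i}, Y s ω ^ 2
          ≤ ∑ i ∈ symmDiff π π', (1 + μ i ^ 2)/n :=
            Finset.sum_le_sum fun i _ => hvar s i
        _ ≤ ∑ _i ∈ symmDiff π π', (2:ℝ)/n := by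
            refine Finset.sum_le_sum fun i _ => ?_
            have h := hμ i
            have : (1 + μ i ^ 2) ≤ 2 := by nlinarith [h.1, h.2]
            exact div_le_div_of_nonneg_right this hn'.le
        _ = 2 * (symmDiff π π').card / n := by
            rw [Finset.sum_const]
            field_simp
            rw [nsmul_eq_mul, mul_div_assoc', mul_div_assoc', mul_div_cancel_left₀ _ hn'.ne']; ring
    calc (∫ ω, ((Z s) ^ 2) ω ∂ℙ) = ∫ ω, (Z s ω)^2 ∂ℙ := by
          simp [Pi.pow_apply]
      _ ≤ 2 * (symmDiff π π').card / n := hgoal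
  calc ((n:ℝ)/T)^2 * ∑ s : Fin T, variance (Z s) ℙ
      ≤ ((n:ℝ)/T)^2 * ∑ _s : Fin T, (2 * ((symmDiff π π').card : ℝ) / n) := by
        apply mul_le_mul_of_nonneg_left _ (sq_nonneg _)
        exact Finset.sum_le_sum fun s _ => hZvar s
    _ = ((n:ℝ)/T)^2 * ((T:ℝ) * (2 * ((symmDiff π π').card : ℝ) / n)) := by
        rw [Finset.sum_const, Finset.card_univ, Fintype.card_fin, nsmul_eq_mul]
    _ = 2 * (symmDiff π π').card * n / T := by
        field_simp
    _ ≤ 4 * (symmDiff π π').card * n / T := by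
        have hc : (0:ℝ) ≤ (symmDiff π π').card := Nat.cast_nonneg _
        gcongr
        nlinarith
end

section
/- There exists a universal constant c > 0 with the following property (persistent-noise / sampling-without-replacement confidence bound). For every n ≥ 1, every family Π ⊆ 2^{[n]}, every fixed vector of deterministic values μ_i ∈ [−1,1], every 1 ≤ T ≤ n and every δ ∈ (0,1): if I_1,…,I_T are sampled uniformly at random without replacement from [n] and μ̂_π := (n/T) Σ_{s=1}^T μ_{I_s}·1{I_s ∈ π}, then with probability at least 1 − δ, simultaneously for all π ∈ Π, | μ̂_π − μ_π | ≤ c·( √( |π| · n · Ṽ_π · ln(e·n/δ) / T ) + n · Ṽ_π · ln(e·n/δ) / T ), where μ_π := Σ_{i∈π} μ_i and Ṽ_π := max{ 1, min{ VC(B_1(|π|)), |π| } }. -/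
open MeasureTheory ProbabilityTheory Finset

namespace Stmt8Aux

noncomputable def SS (n T : ℕ) : Finset (Finset (Fin n)) := (univ : Finset (Fin n)).powersetCard T

noncomputable def ind {n : ℕ} (S : Finset (Fin n)) (i : Fin n) : ℝ := if i ∈ S then 1 else 0

noncomputable def ErrF {n : ℕ} (T : ℕ) (μ : Fin n → ℝ) (S Q : Finset (Fin n)) : ℝ :=
  |((n:ℝ)/T) * (∑ i ∈ Q, μ i * ind S i) - ∑ i ∈ Q, μ i|

noncomputable def Bnd {n : ℕ} (T : ℕ) (Q : Finset (Fin n)) (V : ℕ) (L : ℝ) : ℝ :=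
  2000 * (Real.sqrt ((Q.card : ℝ) * n * V * L / T) + (n:ℝ) * V * L / T)




lemma count_sup {n T : ℕ} (B : Finset (Fin n)) (hB : B.card ≤ T) :
    ((SS n T).filter (fun S => B ⊆ S)).card = (n - B.card).choose (T - B.card) := by
  classical
  have h : ((SS n T).filter (fun S => B ⊆ S)).card
      = ((univ \ B).powersetCard (T - B.card)).card := by
    apply Finset.card_nbij' (fun S => S \ B) (fun S' => S' ∪ B)
    · intro S hS
      simp only [mem_coe, mem_filter, SS, mem_powersetCard] at hS
      obtain ⟨⟨hSu, hScard⟩, hBS⟩ := hS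
      rw [mem_coe, mem_powersetCard]
      exact ⟨sdiff_subset_sdiff hSu le_rfl, by rw [card_sdiff_of_subset hBS, hScard]⟩
    · intro S' hS'
      rw [mem_coe, mem_powersetCard] at hS'
      obtain ⟨hsub, hcard⟩ := hS'
      have hdisj : Disjoint S' B := by
        rw [Finset.subset_sdiff] at hsub
        exact hsub.2
      simp only [mem_coe, mem_filter, SS, mem_powersetCard]
      refine ⟨⟨subset_univ _, ?_⟩, subset_union_right⟩
      rw [card_union_of_disjoint hdisj, hcard, Nat.sub_add_cancel hB]
    · intro S hS
      simp only [mem_coe, mem_filter, SS, mem_powersetCard] at hS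
      exact sdiff_union_of_subset hS.2
    · intro S' hS'
      rw [mem_coe, mem_powersetCard] at hS'
      have hdisj : Disjoint S' B := by
        rw [Finset.subset_sdiff] at hS'
        exact hS'.1.2
      exact union_sdiff_cancel_right hdisj
  rw [h, card_powersetCard, card_sdiff_of_subset (subset_univ B), card_univ, Fintype.card_fin]

lemma count_avoid {n T : ℕ} (B : Finset (Fin n)) :
    ((SS n T).filter (fun S => Disjoint B S)).card = (n - B.card).choose T := by
  classical
  have h : (SS n T).filter (fun S => Disjoint B S) = (univ \ B).powersetCard T := by
    ext S
    simp only [mem_filter, SS, mem_powersetCard, Finset.subset_sdiff]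
    constructor
    · rintro ⟨⟨h1, h2⟩, h3⟩; exact ⟨⟨h1, h3.symm⟩, h2⟩
    · rintro ⟨⟨h1, h2⟩, h3⟩; exact ⟨⟨h1, h3⟩, h2.symm⟩
  rw [h, card_powersetCard, card_sdiff_of_subset (subset_univ B), card_univ, Fintype.card_fin]

lemma R1nat {n T : ℕ} (hTn : T ≤ n) : ∀ b, b ≤ T →
    (n - b).choose (T - b) * n ^ b ≤ n.choose T * T ^ b := by
  intro b
  induction b with
  | zero => simp
  | succ b ih =>
    intro hb
    have hbT : b ≤ T := Nat.le_of_succ_le hb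
    have hbn : b < n := lt_of_lt_of_le hb hTn
    have hnb : 1 ≤ n - b := by omega
    have key : (n - b) * ((n - (b+1)).choose (T - (b+1))) = (n - b).choose (T - b) * (T - b) := by
      have h1 : n - b = (n - (b+1)) + 1 := by omega
      have h2 : T - b = (T - (b+1)) + 1 := by omega
      rw [h1, h2]
      rw [Nat.add_one_mul_choose_eq]
    -- goal : (n - (b+1)).choose (T - (b+1)) * n ^ (b+1) ≤ n.choose T * T ^ (b+1)
    have step : (n - b) * ((n - (b+1)).choose (T - (b+1)) * n ^ (b+1))
        ≤ (n - b) * (n.choose T * T ^ (b+1)) := by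
      calc (n - b) * ((n - (b+1)).choose (T - (b+1)) * n ^ (b+1))
          = ((n - b) * (n - (b+1)).choose (T - (b+1))) * n ^ (b+1) := by ring
        _ = ((n - b).choose (T - b) * (T - b)) * n ^ (b + 1) := by rw [key]
        _ = ((n - b).choose (T - b) * n ^ b) * ((T - b) * n) := by ring
        _ ≤ (n.choose T * T ^ b) * ((T - b) * n) :=
            Nat.mul_le_mul_right _ (ih hbT)
        _ ≤ (n.choose T * T ^ b) * ((n - b) * T) := by
            apply Nat.mul_le_mul_left
            have h1 : (T - b) * n = T * n - b * n := Nat.sub_mul _ _ _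
            have h2 : (n - b) * T = n * T - b * T := Nat.sub_mul _ _ _
            rw [h1, h2]
            have e3 : b * T ≤ b * n := Nat.mul_le_mul_left _ hTn
            have e4 : b * n ≤ T * n := Nat.mul_le_mul_right _ hbT
            have e5 : n * T = T * n := Nat.mul_comm _ _
            have e6 : b * n = n * b := Nat.mul_comm _ _
            omega
        _ = (n - b) * (n.choose T * T ^ (b+1)) := by ring
    exact Nat.le_of_mul_le_mul_left step (by omega)

lemma R2nat {n T : ℕ} (hTn : T ≤ n) : ∀ b,
    (n - b).choose T * n ^ b ≤ n.choose T * (n - T) ^ b := by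
  intro b
  induction b with
  | zero => simp
  | succ b ih =>
    by_cases hT : T = 0
    · subst hT; simp
    by_cases hbn : n ≤ b
    · have h0 : n - (b+1) = 0 := by omega
      rw [h0]
      have : Nat.choose 0 T = 0 := Nat.choose_eq_zero_of_lt (by omega)
      rw [this]; simp
    push_neg at hbn
    have hnb : 1 ≤ n - b := by omega
    have key : (n - (b+1)).choose T * (n - b) = (n - b).choose T * ((n - b) - T) := by
      have h1 : n - (b+1) = (n - b) - 1 := by omega
      rw [h1]
      have := Nat.choose_mul_succ_eq ((n - b) - 1) T
      -- choose_mul_succ_eq : n.choose k * (n + 1) = (n + 1).choose k * (n + 1 - k)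
      have h2 : (n - b) - 1 + 1 = n - b := by omega
      rw [h2] at this
      exact this
    have step : (n - b) * ((n - (b+1)).choose T * n ^ (b+1))
        ≤ (n - b) * (n.choose T * (n - T) ^ (b+1)) := by
      calc (n - b) * ((n - (b+1)).choose T * n ^ (b+1))
          = ((n - (b+1)).choose T * (n - b)) * n ^ (b+1) := by ring
        _ = ((n - b).choose T * ((n - b) - T)) * n ^ (b+1) := by rw [key]
        _ = ((n - b).choose T * n ^ b) * (((n - b) - T) * n) := by ring
        _ ≤ (n.choose T * (n - T) ^ b) * (((n - b) - T) * n) := Nat.mul_le_mul_right _ ih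
        _ ≤ (n.choose T * (n - T) ^ b) * ((n - T) * (n - b)) := by
            apply Nat.mul_le_mul_left
            have e1 : ((n - b) - T) * n = (n - b) * n - T * n := Nat.sub_mul _ _ _
            have e2 : (n - T) * (n - b) = n * (n - b) - T * (n - b) := Nat.sub_mul _ _ _
            rw [e1, e2]
            have e3 : T * (n - b) ≤ T * n := Nat.mul_le_mul_left _ (Nat.sub_le _ _)
            have e4 : (n - b) * n = n * (n - b) := Nat.mul_comm _ _
            have e5 : (n - b) * n ≤ n * n := Nat.mul_le_mul_right _ (Nat.sub_le _ _)
            omega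
        _ = (n - b) * (n.choose T * (n - T) ^ (b+1)) := by ring
    exact Nat.le_of_mul_le_mul_left step (by omega)



lemma RR1 {n T : ℕ} (hn : 1 ≤ n) (hTn : T ≤ n) {b : ℕ} (hb : b ≤ T) :
    ((n - b).choose (T - b) : ℝ) ≤ (n.choose T : ℝ) * ((T : ℝ) / n) ^ b := by
  have hnp : (0 : ℝ) < (n : ℝ) := by positivity
  have hnbp : (0 : ℝ) < ((n : ℝ)) ^ b := by positivity
  have hcast : ((n - b).choose (T - b) : ℝ) * (n : ℝ) ^ b ≤ (n.choose T : ℝ) * (T : ℝ) ^ b := by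
    have := R1nat hTn b hb
    exact_mod_cast this
  rw [div_pow, ← mul_div_assoc, le_div_iff₀ hnbp]
  exact hcast

lemma RR2 {n T : ℕ} (hn : 1 ≤ n) (hTn : T ≤ n) (b : ℕ) :
    ((n - b).choose T : ℝ) ≤ (n.choose T : ℝ) * ((1 : ℝ) - (T : ℝ) / n) ^ b := by
  have hnp : (0 : ℝ) < (n : ℝ) := by positivity
  have hnbp : (0 : ℝ) < ((n : ℝ)) ^ b := by positivity
  have hq : (1 : ℝ) - (T : ℝ) / n = ((n - T : ℕ) : ℝ) / n := by
    rw [Nat.cast_sub hTn]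
    field_simp
  have hcast : ((n - b).choose T : ℝ) * (n : ℝ) ^ b ≤ (n.choose T : ℝ) * ((n - T : ℕ) : ℝ) ^ b := by
    have := R2nat hTn b
    exact_mod_cast this
  rw [hq, div_pow, ← mul_div_assoc, le_div_iff₀ hnbp]
  exact hcast

lemma prod_ind_sub {n : ℕ} (S : Finset (Fin n)) (t : Finset (Fin n)) :
    (∏ i ∈ t, ind S i) = if t ⊆ S then (1:ℝ) else 0 := by
  by_cases h : t ⊆ S
  · rw [if_pos h]
    apply prod_eq_one
    intro i hi
    simp [ind, h hi]
  · rw [if_neg h]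
    obtain ⟨i, hit, hiS⟩ := not_subset.1 h
    apply prod_eq_zero hit
    simp [ind, hiS]

lemma prod_ind_disj {n : ℕ} (S : Finset (Fin n)) (t : Finset (Fin n)) :
    (∏ i ∈ t, (1 - ind S i)) = if Disjoint t S then (1:ℝ) else 0 := by
  by_cases h : Disjoint t S
  · rw [if_pos h]
    apply prod_eq_one
    intro i hi
    have : i ∉ S := Finset.disjoint_left.1 h hi
    simp [ind, this]
  · rw [if_neg h]
    rw [Finset.not_disjoint_iff] at h
    obtain ⟨i, hit, hiS⟩ := h
    apply prod_eq_zero hit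
    simp [ind, hiS]

/-- Upper expansion bound. -/
lemma L1 {n T : ℕ} (hT : 1 ≤ T) (hTn : T ≤ n) (Q : Finset (Fin n)) (a : Fin n → ℝ)
    (ha : ∀ i, 0 ≤ a i) :
    ∑ S ∈ SS n T, ∏ i ∈ Q, (1 + a i * ind S i)
      ≤ (n.choose T : ℝ) * ∏ i ∈ Q, (1 + ((T:ℝ)/n) * a i) := by
  classical
  have hn : 1 ≤ n := le_trans hT hTn
  -- expand each product
  have expand : ∀ S : Finset (Fin n), ∏ i ∈ Q, (1 + a i * ind S i)
      = ∑ t ∈ Q.powerset, (∏ i ∈ t, a i) * (if t ⊆ S then (1:ℝ) else 0) := by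
    intro S
    have h1 : ∀ i, (1 + a i * ind S i) = (a i * ind S i) + 1 := fun i => by ring
    simp_rw [h1]
    rw [Finset.prod_add]
    apply sum_congr rfl
    intro t ht
    rw [prod_const_one, mul_one, prod_mul_distrib, prod_ind_sub]
  simp_rw [expand]
  rw [Finset.sum_comm]
  -- rhs expansion
  have rexpand : ∏ i ∈ Q, (1 + ((T:ℝ)/n) * a i)
      = ∑ t ∈ Q.powerset, (∏ i ∈ t, a i) * ((T:ℝ)/n) ^ t.card := by
    have h1 : ∀ i, (1 + ((T:ℝ)/n) * a i) = (((T:ℝ)/n) * a i) + 1 := fun i => by ring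
    simp_rw [h1]
    rw [Finset.prod_add]
    apply sum_congr rfl
    intro t ht
    rw [prod_const_one, mul_one]
    rw [Finset.prod_mul_distrib, prod_const]
    ring
  rw [rexpand, Finset.mul_sum]
  apply sum_le_sum
  intro t ht
  have hprodnn : (0:ℝ) ≤ ∏ i ∈ t, a i := prod_nonneg (fun i _ => ha i)
  rw [← Finset.sum_filter_add_sum_filter_not (SS n T) (fun S => t ⊆ S)]
  have h2 : ∑ S ∈ (SS n T).filter (fun S => ¬ t ⊆ S), (∏ i ∈ t, a i) * (if t ⊆ S then (1:ℝ) else 0) = 0 := by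
    apply sum_eq_zero
    intro S hS
    rw [mem_filter] at hS
    rw [if_neg hS.2, mul_zero]
  have h1 : ∑ S ∈ (SS n T).filter (fun S => t ⊆ S), (∏ i ∈ t, a i) * (if t ⊆ S then (1:ℝ) else 0)
      = (((SS n T).filter (fun S => t ⊆ S)).card : ℝ) * ∏ i ∈ t, a i := by
    rw [Finset.sum_congr rfl (fun S hS => ?_), sum_const, nsmul_eq_mul]
    rw [mem_filter] at hS
    rw [if_pos hS.2, mul_one]
  rw [h1, h2, add_zero]
  by_cases hbT : t.card ≤ T
  · rw [count_sup t hbT]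
    calc ((n - t.card).choose (T - t.card) : ℝ) * ∏ i ∈ t, a i
        ≤ ((n.choose T : ℝ) * ((T:ℝ)/n) ^ t.card) * ∏ i ∈ t, a i := by
          apply mul_le_mul_of_nonneg_right (RR1 hn hTn hbT) hprodnn
      _ = (n.choose T : ℝ) * ((∏ i ∈ t, a i) * ((T:ℝ)/n) ^ t.card) := by ring
  · -- t.card > T : the filter is empty
    have : (SS n T).filter (fun S => t ⊆ S) = ∅ := by
      rw [filter_eq_empty_iff]
      intro S hS
      rw [SS, mem_powersetCard] at hS
      intro hts
      exact hbT (le_trans (card_le_card hts) (le_of_eq hS.2))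
    rw [this]
    simp only [card_empty, Nat.cast_zero, zero_mul]
    positivity

/-- Lower expansion bound (complement form). -/
lemma L2 {n T : ℕ} (hT : 1 ≤ T) (hTn : T ≤ n) (Q : Finset (Fin n)) (u : ℝ)
    (h0 : 0 ≤ u) (h1 : u ≤ 1) :
    ∑ S ∈ SS n T, ∏ i ∈ Q, (1 - u * ind S i)
      ≤ (n.choose T : ℝ) * (1 - ((T:ℝ)/n) * u) ^ Q.card := by
  classical
  have hn : 1 ≤ n := le_trans hT hTn
  have hp1 : (T:ℝ)/n ≤ 1 := by
    rw [div_le_one (by positivity : (0:ℝ) < n)]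
    exact_mod_cast hTn
  have hp0 : (0:ℝ) ≤ (T:ℝ)/n := by positivity
  have expand : ∀ S : Finset (Fin n), ∏ i ∈ Q, (1 - u * ind S i)
      = ∑ t ∈ Q.powerset, (u ^ t.card * (1-u) ^ (Q \ t).card) * (if Disjoint t S then (1:ℝ) else 0) := by
    intro S
    have h2 : ∀ i, (1 - u * ind S i) = (u * (1 - ind S i)) + (1 - u) := fun i => by ring
    simp_rw [h2]
    rw [Finset.prod_add]
    apply sum_congr rfl
    intro t ht
    rw [prod_const, Finset.prod_mul_distrib, prod_const, prod_ind_disj]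
    rw [mul_ite, mul_one, mul_zero, mul_ite, mul_one, mul_zero]
    split <;> ring_nf
  simp_rw [expand]
  rw [Finset.sum_comm]
  have rexpand : (1 - ((T:ℝ)/n) * u) ^ Q.card
      = ∑ t ∈ Q.powerset, (u ^ t.card * (1-u) ^ (Q \ t).card) * (1 - (T:ℝ)/n) ^ t.card := by
    have h2 : (1 - ((T:ℝ)/n) * u) = (u * (1 - (T:ℝ)/n)) + (1 - u) := by ring
    rw [h2, ← prod_const, Finset.prod_add]
    apply sum_congr rfl
    intro t ht
    rw [prod_const, prod_const, mul_pow]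
    ring
  rw [rexpand, Finset.mul_sum]
  apply sum_le_sum
  intro t ht
  have hcoef : (0:ℝ) ≤ u ^ t.card * (1-u) ^ (Q \ t).card :=
    mul_nonneg (pow_nonneg h0 _) (pow_nonneg (by linarith) _)
  rw [← Finset.sum_filter_add_sum_filter_not (SS n T) (fun S => Disjoint t S)]
  have h2 : ∑ S ∈ (SS n T).filter (fun S => ¬ Disjoint t S),
      (u ^ t.card * (1-u) ^ (Q \ t).card) * (if Disjoint t S then (1:ℝ) else 0) = 0 := by
    apply sum_eq_zero
    intro S hS
    rw [mem_filter] at hS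
    rw [if_neg hS.2, mul_zero]
  have h3 : ∑ S ∈ (SS n T).filter (fun S => Disjoint t S),
      (u ^ t.card * (1-u) ^ (Q \ t).card) * (if Disjoint t S then (1:ℝ) else 0)
      = (((SS n T).filter (fun S => Disjoint t S)).card : ℝ) * (u ^ t.card * (1-u) ^ (Q \ t).card) := by
    rw [Finset.sum_congr rfl (fun S hS => ?_), sum_const, nsmul_eq_mul]
    rw [mem_filter] at hS
    rw [if_pos hS.2, mul_one]
  rw [h3, h2, add_zero, count_avoid t]
  calc ((n - t.card).choose T : ℝ) * (u ^ t.card * (1-u) ^ (Q \ t).card)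
      ≤ ((n.choose T : ℝ) * (1 - (T:ℝ)/n) ^ t.card) * (u ^ t.card * (1-u) ^ (Q \ t).card) :=
        mul_le_mul_of_nonneg_right (RR2 hn hTn t.card) hcoef
    _ = (n.choose T : ℝ) * ((u ^ t.card * (1-u) ^ (Q \ t).card) * (1 - (T:ℝ)/n) ^ t.card) := by ring



lemma exp_le_inv_one_sub {t : ℝ} (ht : t < 1) : Real.exp t ≤ 1 / (1 - t) := by
  have h1 : 0 < 1 - t := by linarith
  rw [le_div_iff₀ h1]
  have h2 : (1 - t) = (-t) + 1 := by ring
  calc Real.exp t * (1 - t) ≤ Real.exp t * Real.exp (-t) := by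
        apply mul_le_mul_of_nonneg_left _ (Real.exp_nonneg t)
        rw [h2]
        exact Real.add_one_le_exp (-t)
    _ = 1 := by rw [← Real.exp_add]; simp

lemma H1 {t : ℝ} (h0 : 0 ≤ t) (h2 : t ≤ 1/2) : Real.exp t ≤ 1 + t + 2 * t^2 := by
  have h1 : Real.exp t ≤ 1 / (1 - t) := exp_le_inv_one_sub (by linarith)
  have h3 : 1 / (1 - t) ≤ 1 + t + 2 * t^2 := by
    rw [div_le_iff₀ (by linarith : (0:ℝ) < 1 - t)]
    nlinarith [sq_nonneg t, h0, h2]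
  linarith

lemma H2 {l : ℝ} (h0 : 0 ≤ l) : l - l^2 ≤ 1 - Real.exp (-l) := by
  have h1 : Real.exp (-l) ≤ 1 / (1 + l) := by
    have := exp_le_inv_one_sub (show -l < 1 by linarith)
    simpa using this
  have h2 : 1 / (1 + l) ≤ 1 - l + l^2 := by
    rw [div_le_iff₀ (by linarith : (0:ℝ) < 1 + l)]
    nlinarith [sq_nonneg l]
  nlinarith

/-- Upper tail bound via L1. -/
lemma tail_up {n T : ℕ} (hT : 1 ≤ T) (hTn : T ≤ n) (Q : Finset (Fin n)) (ν : Fin n → ℝ)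
    (hν0 : ∀ i, 0 ≤ ν i) (hν1 : ∀ i, ν i ≤ 1) (x lam : ℝ) (hl0 : 0 < lam) (hl2 : lam ≤ 1/2) :
    (((SS n T).filter (fun S => ((T:ℝ)/n) * (∑ i ∈ Q, ν i) + x ≤ ∑ i ∈ Q, ν i * ind S i)).card : ℝ)
      ≤ (n.choose T : ℝ) * Real.exp (2 * lam^2 * (((T:ℝ)/n) * (Q.card:ℝ)) - lam * x) := by
  classical
  have hn : 1 ≤ n := le_trans hT hTn
  have hn0 : (0:ℝ) < (n:ℝ) := by exact_mod_cast hn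
  set p : ℝ := (T:ℝ)/n with hp
  have hp0 : 0 ≤ p := by
    rw [hp]
    exact div_nonneg (Nat.cast_nonneg _) (Nat.cast_nonneg _)
  have hp1 : p ≤ 1 := by
    rw [hp, div_le_one hn0]
    exact_mod_cast hTn
  set F := (SS n T).filter (fun S => p * (∑ i ∈ Q, ν i) + x ≤ ∑ i ∈ Q, ν i * ind S i) with hF
  -- Markov step
  have markov : (F.card : ℝ) * Real.exp (lam * (p * (∑ i ∈ Q, ν i) + x))
      ≤ ∑ S ∈ SS n T, Real.exp (lam * ∑ i ∈ Q, ν i * ind S i) := by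
    calc (F.card : ℝ) * Real.exp (lam * (p * (∑ i ∈ Q, ν i) + x))
        = ∑ S ∈ F, Real.exp (lam * (p * (∑ i ∈ Q, ν i) + x)) := by rw [sum_const, nsmul_eq_mul]
      _ ≤ ∑ S ∈ F, Real.exp (lam * ∑ i ∈ Q, ν i * ind S i) := by
          apply sum_le_sum
          intro S hS
          rw [hF, mem_filter] at hS
          exact Real.exp_le_exp.2 (mul_le_mul_of_nonneg_left hS.2 (le_of_lt hl0))
      _ ≤ ∑ S ∈ SS n T, Real.exp (lam * ∑ i ∈ Q, ν i * ind S i) := by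
          apply sum_le_sum_of_subset_of_nonneg (filter_subset _ _)
          intro S _ _
          exact Real.exp_nonneg _
  -- MGF bound
  have mgf : ∑ S ∈ SS n T, Real.exp (lam * ∑ i ∈ Q, ν i * ind S i)
      ≤ (n.choose T : ℝ) * Real.exp (lam * (p * (∑ i ∈ Q, ν i)) + 2 * lam^2 * p * Q.card) := by
    have step1 : ∀ S : Finset (Fin n), Real.exp (lam * ∑ i ∈ Q, ν i * ind S i)
        = ∏ i ∈ Q, (1 + (Real.exp (lam * ν i) - 1) * ind S i) := by
      intro S
      rw [mul_sum, Real.exp_sum]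
      apply prod_congr rfl
      intro i _
      by_cases h : i ∈ S <;> simp [ind, h]
    simp_rw [step1]
    calc ∑ S ∈ SS n T, ∏ i ∈ Q, (1 + (Real.exp (lam * ν i) - 1) * ind S i)
        ≤ (n.choose T : ℝ) * ∏ i ∈ Q, (1 + p * (Real.exp (lam * ν i) - 1)) := by
          apply L1 hT hTn Q _ (fun i => ?_)
          have : (1:ℝ) ≤ Real.exp (lam * ν i) := by
            rw [Real.one_le_exp_iff]
            exact mul_nonneg (le_of_lt hl0) (hν0 i)
          linarith
      _ ≤ (n.choose T : ℝ) * Real.exp (lam * (p * (∑ i ∈ Q, ν i)) + 2 * lam^2 * p * Q.card) := by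
          apply mul_le_mul_of_nonneg_left _ (by positivity)
          calc ∏ i ∈ Q, (1 + p * (Real.exp (lam * ν i) - 1))
              ≤ ∏ i ∈ Q, Real.exp (p * (Real.exp (lam * ν i) - 1)) := by
                apply prod_le_prod
                · intro i _
                  have : (1:ℝ) ≤ Real.exp (lam * ν i) := by
                    rw [Real.one_le_exp_iff]
                    exact mul_nonneg (le_of_lt hl0) (hν0 i)
                  nlinarith
                · intro i _
                  have := Real.add_one_le_exp (p * (Real.exp (lam * ν i) - 1))
                  linarith
            _ = Real.exp (∑ i ∈ Q, p * (Real.exp (lam * ν i) - 1)) := (Real.exp_sum _ _).symm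
            _ ≤ Real.exp (lam * (p * (∑ i ∈ Q, ν i)) + 2 * lam^2 * p * Q.card) := by
                rw [Real.exp_le_exp]
                have bound : ∀ i ∈ Q, p * (Real.exp (lam * ν i) - 1)
                    ≤ p * (lam * ν i) + p * (2 * lam^2) := by
                  intro i _
                  have ht0 : 0 ≤ lam * ν i := mul_nonneg (le_of_lt hl0) (hν0 i)
                  have ht2 : lam * ν i ≤ 1/2 := by
                    calc lam * ν i ≤ lam * 1 := mul_le_mul_of_nonneg_left (hν1 i) (le_of_lt hl0)
                      _ ≤ 1/2 := by linarith
                  have hH := H1 ht0 ht2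
                  have hsq : (lam * ν i)^2 ≤ lam^2 := by
                    have hv2 : (ν i)^2 ≤ 1 := by nlinarith [hν0 i, hν1 i]
                    calc (lam * ν i)^2 = lam^2 * (ν i)^2 := by ring
                      _ ≤ lam^2 * 1 := mul_le_mul_of_nonneg_left hv2 (sq_nonneg lam)
                      _ = lam^2 := mul_one _
                  nlinarith
                calc ∑ i ∈ Q, p * (Real.exp (lam * ν i) - 1)
                    ≤ ∑ i ∈ Q, (p * (lam * ν i) + p * (2 * lam^2)) := sum_le_sum bound
                  _ = lam * (p * (∑ i ∈ Q, ν i)) + 2 * lam^2 * p * Q.card := by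
                      rw [sum_add_distrib, sum_const, nsmul_eq_mul, ← mul_sum, ← mul_sum]
                      ring
  -- combine
  have hexp : (0:ℝ) < Real.exp (lam * (p * (∑ i ∈ Q, ν i) + x)) := Real.exp_pos _
  have final := le_trans markov mgf
  rw [← le_div_iff₀ hexp] at final
  calc (F.card : ℝ)
      ≤ (n.choose T : ℝ) * Real.exp (lam * (p * (∑ i ∈ Q, ν i)) + 2 * lam^2 * p * Q.card)
          / Real.exp (lam * (p * (∑ i ∈ Q, ν i) + x)) := final
    _ = (n.choose T : ℝ) * Real.exp (2 * lam^2 * (p * (Q.card:ℝ)) - lam * x) := by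
        rw [mul_div_assoc, ← Real.exp_sub]
        congr 2
        ring

/-- Lower tail bound on the count via L2. -/
lemma tail_low {n T : ℕ} (hT : 1 ≤ T) (hTn : T ≤ n) (Q : Finset (Fin n))
    (x lam : ℝ) (hl0 : 0 < lam) (hl2 : lam ≤ 1/2) :
    (((SS n T).filter (fun S => (∑ i ∈ Q, ind S i) ≤ ((T:ℝ)/n) * Q.card - x)).card : ℝ)
      ≤ (n.choose T : ℝ) * Real.exp (2 * lam^2 * (((T:ℝ)/n) * (Q.card:ℝ)) - lam * x) := by
  classical
  have hn : 1 ≤ n := le_trans hT hTn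
  have hn0 : (0:ℝ) < (n:ℝ) := by exact_mod_cast hn
  set p : ℝ := (T:ℝ)/n with hp
  have hp0 : 0 ≤ p := by
    rw [hp]
    exact div_nonneg (Nat.cast_nonneg _) (Nat.cast_nonneg _)
  have hp1 : p ≤ 1 := by
    rw [hp, div_le_one hn0]
    exact_mod_cast hTn
  set u : ℝ := 1 - Real.exp (-lam) with hu
  have hu0 : 0 ≤ u := by
    rw [hu, sub_nonneg, Real.exp_le_one_iff]
    linarith
  have hu1 : u ≤ 1 := by
    rw [hu]
    have := Real.exp_pos (-lam)
    linarith
  set F := (SS n T).filter (fun S => (∑ i ∈ Q, ind S i) ≤ p * Q.card - x) with hF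
  have markov : (F.card : ℝ) * Real.exp (-lam * (p * Q.card - x))
      ≤ ∑ S ∈ SS n T, Real.exp (-lam * ∑ i ∈ Q, ind S i) := by
    calc (F.card : ℝ) * Real.exp (-lam * (p * Q.card - x))
        = ∑ S ∈ F, Real.exp (-lam * (p * Q.card - x)) := by rw [sum_const, nsmul_eq_mul]
      _ ≤ ∑ S ∈ F, Real.exp (-lam * ∑ i ∈ Q, ind S i) := by
          apply sum_le_sum
          intro S hS
          rw [hF, mem_filter] at hS
          apply Real.exp_le_exp.2
          have := hS.2
          nlinarith
      _ ≤ ∑ S ∈ SS n T, Real.exp (-lam * ∑ i ∈ Q, ind S i) := by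
          apply sum_le_sum_of_subset_of_nonneg (filter_subset _ _)
          intro S _ _
          exact Real.exp_nonneg _
  have mgf : ∑ S ∈ SS n T, Real.exp (-lam * ∑ i ∈ Q, ind S i)
      ≤ (n.choose T : ℝ) * Real.exp (-lam * (p * Q.card) + lam^2 * p * Q.card) := by
    have step1 : ∀ S : Finset (Fin n), Real.exp (-lam * ∑ i ∈ Q, ind S i)
        = ∏ i ∈ Q, (1 - u * ind S i) := by
      intro S
      rw [mul_sum, Real.exp_sum]
      apply prod_congr rfl
      intro i _
      by_cases h : i ∈ S <;> simp [ind, h, hu]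
    simp_rw [step1]
    calc ∑ S ∈ SS n T, ∏ i ∈ Q, (1 - u * ind S i)
        ≤ (n.choose T : ℝ) * (1 - p * u) ^ Q.card := L2 hT hTn Q u hu0 hu1
      _ ≤ (n.choose T : ℝ) * Real.exp (-lam * (p * Q.card) + lam^2 * p * Q.card) := by
          apply mul_le_mul_of_nonneg_left _ (by positivity)
          have h1 : (1 - p * u) ≤ Real.exp (-(p * u)) := by
            have := Real.add_one_le_exp (-(p*u))
            linarith
          have h0pu : 0 ≤ 1 - p * u := by nlinarith
          calc (1 - p * u) ^ Q.card ≤ (Real.exp (-(p * u))) ^ Q.card :=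
                pow_le_pow_left₀ h0pu h1 _
            _ = Real.exp (-(p * u) * Q.card) := by
                rw [← Real.exp_nat_mul]
                congr 1
                ring
            _ ≤ Real.exp (-lam * (p * Q.card) + lam^2 * p * Q.card) := by
                rw [Real.exp_le_exp]
                have hH2 : lam - lam^2 ≤ u := by
                  rw [hu]
                  exact H2 (le_of_lt hl0)
                have hcard : (0:ℝ) ≤ (Q.card : ℝ) := Nat.cast_nonneg _
                have hkey := mul_le_mul_of_nonneg_right
                  (mul_le_mul_of_nonneg_left hH2 hp0) hcard
                nlinarith [hkey]
  have hexp : (0:ℝ) < Real.exp (-lam * (p * Q.card - x)) := Real.exp_pos _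
  have final := le_trans markov mgf
  rw [← le_div_iff₀ hexp] at final
  calc (F.card : ℝ)
      ≤ (n.choose T : ℝ) * Real.exp (-lam * (p * Q.card) + lam^2 * p * Q.card)
          / Real.exp (-lam * (p * Q.card - x)) := final
    _ = (n.choose T : ℝ) * Real.exp (lam^2 * p * (Q.card:ℝ) - lam * x) := by
        rw [mul_div_assoc, ← Real.exp_sub]
        congr 2
        ring
    _ ≤ (n.choose T : ℝ) * Real.exp (2 * lam^2 * (p * (Q.card:ℝ)) - lam * x) := by
        apply mul_le_mul_of_nonneg_left _ (by positivity)
        rw [Real.exp_le_exp]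
        have h9 : (0:ℝ) ≤ lam^2 * (p * (Q.card:ℝ)) :=
          mul_nonneg (sq_nonneg lam) (mul_nonneg hp0 (Nat.cast_nonneg _))
        linarith

/-- Optimization of the exponent. -/
lemma opt {V x C card : ℝ} (hV : 0 < V) (hx : 0 < x) (hC : 0 ≤ C)
    (h : ∀ lam : ℝ, 0 < lam → lam ≤ 1/2 → card ≤ C * Real.exp (2 * lam^2 * V - lam * x)) :
    card ≤ C * Real.exp (-(min (x^2/(16*V)) (x/4))) := by
  by_cases hcase : x ≤ 4 * V
  · have hlam : 0 < x / (8*V) := by positivity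
    have hlam2 : x / (8*V) ≤ 1/2 := by
      rw [div_le_div_iff₀ (by positivity) (by norm_num)]
      linarith
    have := h (x/(8*V)) hlam hlam2
    calc card ≤ C * Real.exp (2 * (x/(8*V))^2 * V - (x/(8*V)) * x) := this
      _ ≤ C * Real.exp (-(min (x^2/(16*V)) (x/4))) := by
          apply mul_le_mul_of_nonneg_left _ hC
          rw [Real.exp_le_exp]
          have hmin : min (x^2/(16*V)) (x/4) ≤ x^2/(16*V) := min_le_left _ _
          have key : 2 * (x/(8*V))^2 * V - (x/(8*V)) * x ≤ -(x^2/(16*V)) := by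
            have h1 : 2 * (x/(8*V))^2 * V = x^2/(32*V) := by
              field_simp
              ring
            have h2 : (x/(8*V)) * x = x^2/(8*V) := by
              field_simp
            rw [h1, h2]
            have e : x^2/(32*V) - x^2/(8*V) + x^2/(16*V) = -(x^2/(32*V)) := by
              field_simp
              ring
            have e2 : (0:ℝ) ≤ x^2/(32*V) := by positivity
            linarith
          linarith
  · push_neg at hcase
    have := h (1/2) (by norm_num) le_rfl
    calc card ≤ C * Real.exp (2 * (1/2)^2 * V - (1/2) * x) := this
      _ ≤ C * Real.exp (-(min (x^2/(16*V)) (x/4))) := by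
          apply mul_le_mul_of_nonneg_left _ hC
          rw [Real.exp_le_exp]
          have hmin : min (x^2/(16*V)) (x/4) ≤ x/4 := min_le_right _ _
          have key : 2 * (1/2:ℝ)^2 * V - (1/2) * x ≤ -(x/4) := by nlinarith
          linarith



/-- Deterministic case : if `Q.card ≤ V` then no set violates the bound. -/
lemma per_pi_det {n T : ℕ} (hT : 1 ≤ T) (hTn : T ≤ n) (μ : Fin n → ℝ)
    (hμ : ∀ i, μ i ∈ Set.Icc (-1:ℝ) 1) (Q : Finset (Fin n)) (V : ℕ) (L : ℝ) (hL : 1 ≤ L)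
    (hkV : Q.card ≤ V) :
    (SS n T).filter (fun S => Bnd T Q V L < ErrF T μ S Q) = ∅ := by
  classical
  rw [filter_eq_empty_iff]
  intro S _
  rw [not_lt]
  have hn : 1 ≤ n := le_trans hT hTn
  have hT0 : (0:ℝ) < (T:ℝ) := by exact_mod_cast hT
  have hn0 : (0:ℝ) < (n:ℝ) := by exact_mod_cast hn
  have habs : ∀ i ∈ Q, |μ i * ind S i| ≤ 1 := by
    intro i _
    rw [abs_mul]
    have h1 : |μ i| ≤ 1 := abs_le.2 ⟨(hμ i).1, (hμ i).2⟩
    have h2 : |ind S i| ≤ 1 := by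
      unfold ind; split <;> simp
    calc |μ i| * |ind S i| ≤ 1 * 1 := mul_le_mul h1 h2 (abs_nonneg _) zero_le_one
      _ = 1 := by norm_num
  have hZ : |∑ i ∈ Q, μ i * ind S i| ≤ (Q.card : ℝ) := by
    calc |∑ i ∈ Q, μ i * ind S i| ≤ ∑ i ∈ Q, |μ i * ind S i| := abs_sum_le_sum_abs _ _
      _ ≤ ∑ _i ∈ Q, (1:ℝ) := sum_le_sum habs
      _ = (Q.card : ℝ) := by rw [sum_const, nsmul_eq_mul, mul_one]
  have hM : |∑ i ∈ Q, μ i| ≤ (Q.card : ℝ) := by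
    calc |∑ i ∈ Q, μ i| ≤ ∑ i ∈ Q, |μ i| := abs_sum_le_sum_abs _ _
      _ ≤ ∑ _i ∈ Q, (1:ℝ) := sum_le_sum (fun i _ => abs_le.2 ⟨(hμ i).1, (hμ i).2⟩)
      _ = (Q.card : ℝ) := by rw [sum_const, nsmul_eq_mul, mul_one]
  have hnT1 : (1:ℝ) ≤ (n:ℝ)/T := by
    rw [le_div_iff₀ hT0, one_mul]
    exact_mod_cast hTn
  have hErr : ErrF T μ S Q ≤ 2 * ((n:ℝ)/T) * Q.card := by
    unfold ErrF
    calc |((n:ℝ)/T) * (∑ i ∈ Q, μ i * ind S i) - ∑ i ∈ Q, μ i|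
        ≤ |((n:ℝ)/T) * (∑ i ∈ Q, μ i * ind S i)| + |∑ i ∈ Q, μ i| := abs_sub _ _
      _ = ((n:ℝ)/T) * |∑ i ∈ Q, μ i * ind S i| + |∑ i ∈ Q, μ i| := by
          rw [abs_mul, abs_of_pos (div_pos hn0 hT0)]
      _ ≤ ((n:ℝ)/T) * (Q.card:ℝ) + (Q.card:ℝ) := by
          have := mul_le_mul_of_nonneg_left hZ (le_of_lt (div_pos hn0 hT0))
          linarith
      _ ≤ ((n:ℝ)/T) * (Q.card:ℝ) + ((n:ℝ)/T) * (Q.card:ℝ) := by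
          have := mul_le_mul_of_nonneg_right hnT1 (Nat.cast_nonneg (α := ℝ) Q.card)
          nlinarith [Nat.cast_nonneg (α := ℝ) Q.card]
      _ = 2 * ((n:ℝ)/T) * Q.card := by ring
  have hbd : 2 * ((n:ℝ)/T) * Q.card ≤ Bnd T Q V L := by
    unfold Bnd
    have h1 : (Q.card : ℝ) ≤ (V:ℝ) * L := by
      calc (Q.card:ℝ) ≤ (V:ℝ) := by exact_mod_cast hkV
        _ = (V:ℝ) * 1 := (mul_one _).symm
        _ ≤ (V:ℝ) * L := mul_le_mul_of_nonneg_left hL (Nat.cast_nonneg _)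
    have h2 : 2 * ((n:ℝ)/T) * (Q.card:ℝ) ≤ 2000 * ((n:ℝ) * V * L / T) := by
      have h3 : ((n:ℝ)/T) * (Q.card:ℝ) ≤ ((n:ℝ)/T) * ((V:ℝ)*L) :=
        mul_le_mul_of_nonneg_left h1 (le_of_lt (div_pos hn0 hT0))
      have h4 : ((n:ℝ)/T) * ((V:ℝ)*L) = (n:ℝ) * V * L / T := by ring
      nlinarith [h3, h4 ▸ h3]
    have h5 : (0:ℝ) ≤ Real.sqrt ((Q.card : ℝ) * n * V * L / T) := Real.sqrt_nonneg _
    linarith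
  linarith

set_option maxHeartbeats 1000000 in
lemma per_pi_prob {n T : ℕ} (hT : 1 ≤ T) (hTn : T ≤ n) (μ : Fin n → ℝ)
    (hμ : ∀ i, μ i ∈ Set.Icc (-1:ℝ) 1) (Q : Finset (Fin n)) (hk : 1 ≤ Q.card)
    (V : ℕ) (hV : 1 ≤ V) (L : ℝ) (hL : 1 ≤ L) :
    ((((SS n T).filter (fun S => Bnd T Q V L < ErrF T μ S Q)).card) : ℝ)
      ≤ 5 * (n.choose T : ℝ) * Real.exp (-(125 * V * L)) := by
  classical
  have hn : 1 ≤ n := le_trans hT hTn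
  have hT0 : (0:ℝ) < (T:ℝ) := by exact_mod_cast hT
  have hn0 : (0:ℝ) < (n:ℝ) := by exact_mod_cast hn
  set p : ℝ := (T:ℝ)/n with hp
  have hp0 : 0 < p := by rw [hp]; exact div_pos hT0 hn0
  set kR : ℝ := (Q.card : ℝ) with hkR
  have hkR1 : 1 ≤ kR := by rw [hkR]; exact_mod_cast hk
  set VL : ℝ := (V:ℝ) * L with hVL
  have hVL1 : 1 ≤ VL := by
    rw [hVL]
    calc (1:ℝ) = 1 * 1 := by norm_num
      _ ≤ (V:ℝ) * L := mul_le_mul (by exact_mod_cast hV) hL zero_le_one (Nat.cast_nonneg _)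
  set x : ℝ := 500 * (Real.sqrt (p * kR * VL) + VL) with hx
  have hx0 : 0 < x := by
    rw [hx]
    have := Real.sqrt_nonneg (p * kR * VL)
    nlinarith
  set νp : Fin n → ℝ := fun i => max (μ i) 0 with hνp
  set νm : Fin n → ℝ := fun i => max (-(μ i)) 0 with hνm
  set wp : Fin n → ℝ := fun i => 1 - νp i with hwp
  set wm : Fin n → ℝ := fun i => 1 - νm i with hwm
  have hνp0 : ∀ i, 0 ≤ νp i := fun i => le_max_right _ _
  have hνm0 : ∀ i, 0 ≤ νm i := fun i => le_max_right _ _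
  have hνp1 : ∀ i, νp i ≤ 1 := fun i => max_le (hμ i).2 zero_le_one
  have hνm1 : ∀ i, νm i ≤ 1 := fun i => max_le (by linarith [(hμ i).1]) zero_le_one
  have hwp0 : ∀ i, 0 ≤ wp i := fun i => by simp only [hwp]; linarith [hνp1 i]
  have hwm0 : ∀ i, 0 ≤ wm i := fun i => by simp only [hwm]; linarith [hνm1 i]
  have hwp1 : ∀ i, wp i ≤ 1 := fun i => by simp only [hwp]; linarith [hνp0 i]
  have hwm1 : ∀ i, wm i ≤ 1 := fun i => by simp only [hwm]; linarith [hνm0 i]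
  set E1 := (SS n T).filter (fun S => p * (∑ i ∈ Q, νp i) + x ≤ ∑ i ∈ Q, νp i * ind S i) with hE1
  set E2 := (SS n T).filter (fun S => p * (∑ i ∈ Q, wp i) + x ≤ ∑ i ∈ Q, wp i * ind S i) with hE2
  set E3 := (SS n T).filter (fun S => p * (∑ i ∈ Q, νm i) + x ≤ ∑ i ∈ Q, νm i * ind S i) with hE3
  set E4 := (SS n T).filter (fun S => p * (∑ i ∈ Q, wm i) + x ≤ ∑ i ∈ Q, wm i * ind S i) with hE4
  set E5 := (SS n T).filter (fun S => (∑ i ∈ Q, ind S i) ≤ p * kR - x) with hE5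
  -- inclusion
  have hsub : (SS n T).filter (fun S => Bnd T Q V L < ErrF T μ S Q) ⊆ E1 ∪ E2 ∪ E3 ∪ E4 ∪ E5 := by
    intro S hS
    rw [mem_filter] at hS
    obtain ⟨hSS, hviol⟩ := hS
    by_contra hnot
    simp only [mem_union, not_or] at hnot
    obtain ⟨⟨⟨⟨h1, h2⟩, h3⟩, h4⟩, h5⟩ := hnot
    have g1 : ¬ (p * (∑ i ∈ Q, νp i) + x ≤ ∑ i ∈ Q, νp i * ind S i) := by
      intro hcon; exact h1 (by rw [hE1, mem_filter]; exact ⟨hSS, hcon⟩)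
    have g2 : ¬ (p * (∑ i ∈ Q, wp i) + x ≤ ∑ i ∈ Q, wp i * ind S i) := by
      intro hcon; exact h2 (by rw [hE2, mem_filter]; exact ⟨hSS, hcon⟩)
    have g3 : ¬ (p * (∑ i ∈ Q, νm i) + x ≤ ∑ i ∈ Q, νm i * ind S i) := by
      intro hcon; exact h3 (by rw [hE3, mem_filter]; exact ⟨hSS, hcon⟩)
    have g4 : ¬ (p * (∑ i ∈ Q, wm i) + x ≤ ∑ i ∈ Q, wm i * ind S i) := by
      intro hcon; exact h4 (by rw [hE4, mem_filter]; exact ⟨hSS, hcon⟩)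
    have g5 : ¬ ((∑ i ∈ Q, ind S i) ≤ p * kR - x) := by
      intro hcon; exact h5 (by rw [hE5, mem_filter]; exact ⟨hSS, hcon⟩)
    push_neg at g1 g2 g3 g4 g5
    -- identities
    have hid : ∀ i, μ i = νp i - νm i := by
      intro i
      simp only [hνp, hνm]
      rcases le_total (μ i) 0 with h | h
      · rw [max_eq_right h, max_eq_left (by linarith)]; ring
      · rw [max_eq_left h, max_eq_right (by linarith)]; ring
    have hZsplit : (∑ i ∈ Q, μ i * ind S i)
        = (∑ i ∈ Q, νp i * ind S i) - (∑ i ∈ Q, νm i * ind S i) := by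
      rw [← sum_sub_distrib]
      apply sum_congr rfl
      intro i _
      rw [hid i]; ring
    have hMsplit : (∑ i ∈ Q, μ i) = (∑ i ∈ Q, νp i) - (∑ i ∈ Q, νm i) := by
      rw [← sum_sub_distrib]
      exact sum_congr rfl (fun i _ => hid i)
    have hWpsum : (∑ i ∈ Q, wp i * ind S i)
        = (∑ i ∈ Q, ind S i) - (∑ i ∈ Q, νp i * ind S i) := by
      rw [← sum_sub_distrib]
      apply sum_congr rfl
      intro i _
      simp only [hwp]; ring
    have hWmsum : (∑ i ∈ Q, wm i * ind S i)
        = (∑ i ∈ Q, ind S i) - (∑ i ∈ Q, νm i * ind S i) := by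
      rw [← sum_sub_distrib]
      apply sum_congr rfl
      intro i _
      simp only [hwm]; ring
    have hWpS : (∑ i ∈ Q, wp i) = kR - (∑ i ∈ Q, νp i) := by
      have e : (∑ i ∈ Q, wp i) = ∑ i ∈ Q, ((1:ℝ) - νp i) := rfl
      rw [e, sum_sub_distrib, sum_const, nsmul_eq_mul, mul_one, hkR]
    have hWmS : (∑ i ∈ Q, wm i) = kR - (∑ i ∈ Q, νm i) := by
      have e : (∑ i ∈ Q, wm i) = ∑ i ∈ Q, ((1:ℝ) - νm i) := rfl
      rw [e, sum_sub_distrib, sum_const, nsmul_eq_mul, mul_one, hkR]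
    -- bound each deviation
    have dev_p : |(∑ i ∈ Q, νp i * ind S i) - p * (∑ i ∈ Q, νp i)| ≤ 2 * x := by
      rw [abs_le]
      constructor
      · have key : p * (∑ i ∈ Q, νp i) - (∑ i ∈ Q, νp i * ind S i)
            = ((∑ i ∈ Q, wp i * ind S i) - p * (∑ i ∈ Q, wp i))
              + (p * kR - (∑ i ∈ Q, ind S i)) := by
          rw [hWpsum, hWpS]; ring
        have b1 : (∑ i ∈ Q, wp i * ind S i) - p * (∑ i ∈ Q, wp i) < x := by linarith [g2]
        have b2 : p * kR - (∑ i ∈ Q, ind S i) < x := by linarith [g5]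
        linarith [key, b1, b2]
      · linarith [g1]
    have dev_m : |(∑ i ∈ Q, νm i * ind S i) - p * (∑ i ∈ Q, νm i)| ≤ 2 * x := by
      rw [abs_le]
      constructor
      · have key : p * (∑ i ∈ Q, νm i) - (∑ i ∈ Q, νm i * ind S i)
            = ((∑ i ∈ Q, wm i * ind S i) - p * (∑ i ∈ Q, wm i))
              + (p * kR - (∑ i ∈ Q, ind S i)) := by
          rw [hWmsum, hWmS]; ring
        have b1 : (∑ i ∈ Q, wm i * ind S i) - p * (∑ i ∈ Q, wm i) < x := by linarith [g4]
        have b2 : p * kR - (∑ i ∈ Q, ind S i) < x := by linarith [g5]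
        linarith [key, b1, b2]
      · linarith [g3]
    -- total error bound
    have hptn : ((n:ℝ)/T) * p = 1 := by
      rw [hp]; field_simp
    have herr2 : ErrF T μ S Q ≤ ((n:ℝ)/T) * (4 * x) := by
      unfold ErrF
      have e1 : ((n:ℝ)/T) * (∑ i ∈ Q, μ i * ind S i) - ∑ i ∈ Q, μ i
          = ((n:ℝ)/T) * ((∑ i ∈ Q, μ i * ind S i) - p * (∑ i ∈ Q, μ i)) := by
        rw [mul_sub]
        rw [show ((n:ℝ)/T) * (p * (∑ i ∈ Q, μ i)) = (((n:ℝ)/T) * p) * (∑ i ∈ Q, μ i) by ring]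
        rw [hptn, one_mul]
      rw [e1, abs_mul, abs_of_pos (div_pos hn0 hT0)]
      apply mul_le_mul_of_nonneg_left _ (le_of_lt (div_pos hn0 hT0))
      have e2 : (∑ i ∈ Q, μ i * ind S i) - p * (∑ i ∈ Q, μ i)
          = ((∑ i ∈ Q, νp i * ind S i) - p * (∑ i ∈ Q, νp i))
            - ((∑ i ∈ Q, νm i * ind S i) - p * (∑ i ∈ Q, νm i)) := by
        rw [hZsplit, hMsplit]; ring
      rw [e2]
      calc |(((∑ i ∈ Q, νp i * ind S i) - p * (∑ i ∈ Q, νp i)))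
            - ((∑ i ∈ Q, νm i * ind S i) - p * (∑ i ∈ Q, νm i))|
          ≤ |(∑ i ∈ Q, νp i * ind S i) - p * (∑ i ∈ Q, νp i)|
            + |(∑ i ∈ Q, νm i * ind S i) - p * (∑ i ∈ Q, νm i)| := abs_sub _ _
        _ ≤ 2*x + 2*x := add_le_add dev_p dev_m
        _ = 4 * x := by ring
    have hBndx : ((n:ℝ)/T) * (4 * x) = Bnd T Q V L := by
      unfold Bnd
      rw [hx]
      have hsq : ((n:ℝ)/T) * Real.sqrt (p * kR * VL) = Real.sqrt (kR * (n:ℝ) * V * L / T) := by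
        rw [show ((n:ℝ)/T) * Real.sqrt (p * kR * VL)
            = Real.sqrt (((n:ℝ)/T)^2) * Real.sqrt (p * kR * VL) by
          rw [Real.sqrt_sq (le_of_lt (div_pos hn0 hT0))]]
        rw [← Real.sqrt_mul (sq_nonneg _) _]
        congr 1
        rw [hp, hVL]
        field_simp
      rw [← hsq]
      rw [hVL]
      field_simp
      ring
    rw [hBndx] at herr2
    linarith [hviol, herr2]
  -- cardinality bound
  have hcard : (((SS n T).filter (fun S => Bnd T Q V L < ErrF T μ S Q)).card : ℝ)
      ≤ ((E1.card : ℝ) + E2.card + E3.card + E4.card + E5.card) := by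
    have h1 : ((SS n T).filter (fun S => Bnd T Q V L < ErrF T μ S Q)).card
        ≤ (E1 ∪ E2 ∪ E3 ∪ E4 ∪ E5).card := card_le_card hsub
    have h2 : (E1 ∪ E2 ∪ E3 ∪ E4 ∪ E5).card
        ≤ E1.card + E2.card + E3.card + E4.card + E5.card := by
      calc (E1 ∪ E2 ∪ E3 ∪ E4 ∪ E5).card ≤ (E1 ∪ E2 ∪ E3 ∪ E4).card + E5.card := card_union_le _ _
        _ ≤ ((E1 ∪ E2 ∪ E3).card + E4.card) + E5.card := by
            have := card_union_le (E1 ∪ E2 ∪ E3) E4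
            omega
        _ ≤ (((E1 ∪ E2).card + E3.card) + E4.card) + E5.card := by
            have := card_union_le (E1 ∪ E2) E3
            omega
        _ ≤ E1.card + E2.card + E3.card + E4.card + E5.card := by
            have := card_union_le E1 E2
            omega
    calc (((SS n T).filter (fun S => Bnd T Q V L < ErrF T μ S Q)).card : ℝ)
        ≤ ((E1 ∪ E2 ∪ E3 ∪ E4 ∪ E5).card : ℝ) := by exact_mod_cast h1
      _ ≤ _ := by exact_mod_cast h2
  -- each event bound
  have hpk : 0 < p * kR := mul_pos hp0 (lt_of_lt_of_le zero_lt_one hkR1)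
  have hexpbd : Real.exp (-(min (x^2/(16*(p*kR))) (x/4))) ≤ Real.exp (-(125 * V * L)) := by
    rw [Real.exp_le_exp, neg_le_neg_iff]
    apply le_min
    · have hsqx : 500 * Real.sqrt (p * kR * VL) ≤ x := by
        rw [hx]
        nlinarith [hVL1]
      have hs2 : (500 * Real.sqrt (p * kR * VL))^2 = 250000 * (p * kR * VL) := by
        rw [mul_pow, Real.sq_sqrt (le_of_lt (mul_pos hpk (lt_of_lt_of_le zero_lt_one hVL1)))]
        ring
      have hxx : 250000 * (p * kR * VL) ≤ x^2 := by
        rw [← hs2]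
        apply pow_le_pow_left₀ (mul_nonneg (by norm_num) (Real.sqrt_nonneg _)) hsqx
      rw [hVL] at hxx
      rw [le_div_iff₀ (mul_pos (by norm_num) hpk)]
      nlinarith [hxx, hpk, hVL1]
    · have : 500 * VL ≤ x := by
        rw [hx]
        nlinarith [Real.sqrt_nonneg (p * kR * VL)]
      rw [hVL] at this
      linarith
  have hchoose0 : (0:ℝ) ≤ (n.choose T : ℝ) := Nat.cast_nonneg _
  have bd1 : (E1.card : ℝ) ≤ (n.choose T : ℝ) * Real.exp (-(125 * V * L)) := by
    have h1 : ∀ lam : ℝ, 0 < lam → lam ≤ 1/2 →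
        ((E1.card : ℝ)) ≤ (n.choose T:ℝ) * Real.exp (2*lam^2*(p*kR) - lam*x) := by
      intro lam hl0 hl2
      exact tail_up hT hTn Q νp hνp0 hνp1 x lam hl0 hl2
    exact le_trans (opt hpk hx0 hchoose0 h1) (mul_le_mul_of_nonneg_left hexpbd hchoose0)
  have bd2 : (E2.card : ℝ) ≤ (n.choose T : ℝ) * Real.exp (-(125 * V * L)) := by
    have h1 : ∀ lam : ℝ, 0 < lam → lam ≤ 1/2 →
        ((E2.card : ℝ)) ≤ (n.choose T:ℝ) * Real.exp (2*lam^2*(p*kR) - lam*x) := by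
      intro lam hl0 hl2
      exact tail_up hT hTn Q wp hwp0 hwp1 x lam hl0 hl2
    exact le_trans (opt hpk hx0 hchoose0 h1) (mul_le_mul_of_nonneg_left hexpbd hchoose0)
  have bd3 : (E3.card : ℝ) ≤ (n.choose T : ℝ) * Real.exp (-(125 * V * L)) := by
    have h1 : ∀ lam : ℝ, 0 < lam → lam ≤ 1/2 →
        ((E3.card : ℝ)) ≤ (n.choose T:ℝ) * Real.exp (2*lam^2*(p*kR) - lam*x) := by
      intro lam hl0 hl2
      exact tail_up hT hTn Q νm hνm0 hνm1 x lam hl0 hl2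
    exact le_trans (opt hpk hx0 hchoose0 h1) (mul_le_mul_of_nonneg_left hexpbd hchoose0)
  have bd4 : (E4.card : ℝ) ≤ (n.choose T : ℝ) * Real.exp (-(125 * V * L)) := by
    have h1 : ∀ lam : ℝ, 0 < lam → lam ≤ 1/2 →
        ((E4.card : ℝ)) ≤ (n.choose T:ℝ) * Real.exp (2*lam^2*(p*kR) - lam*x) := by
      intro lam hl0 hl2
      exact tail_up hT hTn Q wm hwm0 hwm1 x lam hl0 hl2
    exact le_trans (opt hpk hx0 hchoose0 h1) (mul_le_mul_of_nonneg_left hexpbd hchoose0)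
  have bd5 : (E5.card : ℝ) ≤ (n.choose T : ℝ) * Real.exp (-(125 * V * L)) := by
    have h1 : ∀ lam : ℝ, 0 < lam → lam ≤ 1/2 →
        ((E5.card : ℝ)) ≤ (n.choose T:ℝ) * Real.exp (2*lam^2*(p*kR) - lam*x) := by
      intro lam hl0 hl2
      exact tail_low hT hTn Q x lam hl0 hl2
    exact le_trans (opt hpk hx0 hchoose0 h1) (mul_le_mul_of_nonneg_left hexpbd hchoose0)
  calc (((SS n T).filter (fun S => Bnd T Q V L < ErrF T μ S Q)).card : ℝ)
      ≤ ((E1.card : ℝ) + E2.card + E3.card + E4.card + E5.card) := hcard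
    _ ≤ 5 * (n.choose T : ℝ) * Real.exp (-(125 * V * L)) := by linarith



lemma sauer {n : ℕ} (hn : 1 ≤ n) (F1 : Finset (Finset (Fin n))) :
    F1.card ≤ (n+1) ^ (F1.vcDim + 1) := by
  classical
  have h1 : F1.card ≤ F1.shatterer.card := card_le_card_shatterer _
  have h2 : F1.shatterer.card ≤ ∑ k ∈ Iic F1.vcDim, n.choose k := by
    have := card_shatterer_le_sum_vcDim (𝒜 := F1)
    rwa [Fintype.card_fin] at this
  have h3 : ∑ k ∈ Iic F1.vcDim, n.choose k ≤ ∑ k ∈ Iic F1.vcDim, n ^ k := by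
    apply sum_le_sum
    intro k _
    calc n.choose k ≤ n.descFactorial k := by
          rw [Nat.descFactorial_eq_factorial_mul_choose]
          exact Nat.le_mul_of_pos_left _ (Nat.factorial_pos _)
      _ ≤ n ^ k := Nat.descFactorial_le_pow _ _
  have h4 : ∑ k ∈ Iic F1.vcDim, n ^ k ≤ (F1.vcDim + 1) * n ^ F1.vcDim := by
    have := Finset.sum_le_card_nsmul (Iic F1.vcDim) (fun k => n ^ k) (n ^ F1.vcDim)
      (fun k hk => Nat.pow_le_pow_right hn (by simpa using hk))
    simpa [Nat.card_Iic, smul_eq_mul] using this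
  have hd : F1.vcDim ≤ n := by
    apply Finset.sup_le
    intro s _
    exact le_trans (card_le_univ s) (by simp)
  have h5 : (F1.vcDim + 1) * n ^ F1.vcDim ≤ (n+1) ^ (F1.vcDim + 1) := by
    calc (F1.vcDim + 1) * n ^ F1.vcDim ≤ (n + 1) * (n+1) ^ F1.vcDim :=
        Nat.mul_le_mul (by omega) (Nat.pow_le_pow_left (by omega) _)
      _ = (n+1) ^ (F1.vcDim + 1) := by rw [pow_succ]; ring
  omega

set_option maxHeartbeats 1000000 in
/-- Global counting bound. -/
lemma global_bound {n T : ℕ} (hT : 1 ≤ T) (hTn : T ≤ n) (μ : Fin n → ℝ)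
    (hμ : ∀ i, μ i ∈ Set.Icc (-1:ℝ) 1) (F : Finset (Finset (Fin n))) (δ : ℝ)
    (hδ0 : 0 < δ) (hδ1 : δ < 1) :
    (((SS n T).filter (fun S => ∃ Q ∈ F,
        Bnd T Q (max 1 (min ((F.filter fun ρ => ρ.card = Q.card).vcDim) Q.card))
          (Real.log (Real.exp 1 * n / δ)) < ErrF T μ S Q)).card : ℝ)
      ≤ δ * (n.choose T : ℝ) := by
  classical
  have hn : 1 ≤ n := le_trans hT hTn
  have hn0 : (0:ℝ) < (n:ℝ) := by exact_mod_cast hn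
  have hn1 : (1:ℝ) ≤ (n:ℝ) := by exact_mod_cast hn
  have he : (2:ℝ) ≤ Real.exp 1 := by
    have := Real.add_one_le_exp 1
    linarith
  set L : ℝ := Real.log (Real.exp 1 * n / δ) with hLdef
  have hL1 : 1 ≤ L := by
    rw [hLdef]
    calc (1:ℝ) = Real.log (Real.exp 1) := (Real.log_exp 1).symm
      _ ≤ Real.log (Real.exp 1 * n / δ) := by
          apply Real.log_le_log (Real.exp_pos 1)
          rw [le_div_iff₀ hδ0]
          calc Real.exp 1 * δ ≤ Real.exp 1 * 1 := by
                apply mul_le_mul_of_nonneg_left (le_of_lt hδ1) (Real.exp_nonneg 1)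
            _ = Real.exp 1 := mul_one _
            _ ≤ Real.exp 1 * n := by nlinarith [Real.exp_pos 1, hn1]
  have hlogn1 : Real.log ((n:ℝ)+1) ≤ L := by
    rw [hLdef]
    apply Real.log_le_log (by positivity)
    rw [le_div_iff₀ hδ0]
    nlinarith [hδ1, hδ0, hn1, he]
  have hVt : ∀ Q : Finset (Fin n), Q ∈ F →
      (((SS n T).filter (fun S =>
        Bnd T Q (max 1 (min ((F.filter fun ρ => ρ.card = Q.card).vcDim) Q.card)) L
          < ErrF T μ S Q)).card : ℝ) ≥ 0 := fun _ _ => Nat.cast_nonneg _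
  -- bound the bad set by the union over F
  set BadP := fun (Q : Finset (Fin n)) => (SS n T).filter (fun S =>
    Bnd T Q (max 1 (min ((F.filter fun ρ => ρ.card = Q.card).vcDim) Q.card)) L
      < ErrF T μ S Q) with hBadP
  have hsub : (SS n T).filter (fun S => ∃ Q ∈ F,
      Bnd T Q (max 1 (min ((F.filter fun ρ => ρ.card = Q.card).vcDim) Q.card)) L
        < ErrF T μ S Q) ⊆ F.biUnion BadP := by
    intro S hS
    rw [mem_filter] at hS
    obtain ⟨Q, hQF, hQ⟩ := hS.2
    rw [mem_biUnion]
    refine ⟨Q, hQF, ?_⟩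
    simp only [hBadP, mem_filter]
    exact ⟨hS.1, hQ⟩
  have hstep1 : (((SS n T).filter (fun S => ∃ Q ∈ F,
      Bnd T Q (max 1 (min ((F.filter fun ρ => ρ.card = Q.card).vcDim) Q.card)) L
        < ErrF T μ S Q)).card : ℝ) ≤ ∑ Q ∈ F, ((BadP Q).card : ℝ) := by
    calc (((SS n T).filter _).card : ℝ) ≤ ((F.biUnion BadP).card : ℝ) := by
          exact_mod_cast card_le_card hsub
      _ ≤ ((∑ Q ∈ F, (BadP Q).card : ℕ) : ℝ) := by exact_mod_cast card_biUnion_le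
      _ = ∑ Q ∈ F, ((BadP Q).card : ℝ) := by push_cast; ring
  -- fiberwise grouping by cardinality
  have hfiber : ∑ Q ∈ F, ((BadP Q).card : ℝ)
      = ∑ k ∈ range (n+1), ∑ Q ∈ F.filter (fun Q => Q.card = k), ((BadP Q).card : ℝ) := by
    rw [Finset.sum_fiberwise_of_maps_to]
    intro Q hQ
    rw [mem_range]
    have := card_le_univ Q
    simp only [card_univ, Fintype.card_fin] at this
    omega
  -- per fiber bound
  have hperfiber : ∀ k ∈ range (n+1),
      ∑ Q ∈ F.filter (fun Q => Q.card = k), ((BadP Q).card : ℝ)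
        ≤ 5 * (n.choose T : ℝ) * Real.exp (-(123 * L)) := by
    intro k _
    set Fk := F.filter (fun Q => Q.card = k) with hFk
    set d := Fk.vcDim with hd
    set vk := max 1 (min d k) with hvk
    have hvk1 : 1 ≤ vk := le_max_left _ _
    have hBadPQ : ∀ Q ∈ Fk, BadP Q = (SS n T).filter (fun S => Bnd T Q vk L < ErrF T μ S Q) := by
      intro Q hQ
      simp only [hBadP]
      rw [hFk, mem_filter] at hQ
      have e1 : (F.filter fun ρ => ρ.card = Q.card) = Fk := by
        rw [hFk, hQ.2]
      rw [e1]
      have e2 : Q.card = k := hQ.2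
      rw [e2, hvk, hd]
  -- case split on d < k
    by_cases hdk : d < k
    · -- probabilistic case
      have hbound : ∀ Q ∈ Fk, ((BadP Q).card : ℝ)
          ≤ 5 * (n.choose T : ℝ) * Real.exp (-(125 * vk * L)) := by
        intro Q hQ
        rw [hBadPQ Q hQ]
        have hQk : Q.card = k := by
          rw [hFk, mem_filter] at hQ
          exact hQ.2
        have hk1 : 1 ≤ Q.card := by omega
        exact per_pi_prob hT hTn μ hμ Q hk1 vk hvk1 L hL1
      calc ∑ Q ∈ Fk, ((BadP Q).card : ℝ)
          ≤ ∑ _Q ∈ Fk, (5 * (n.choose T : ℝ) * Real.exp (-(125 * vk * L))) := sum_le_sum hbound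
        _ = (Fk.card : ℝ) * (5 * (n.choose T : ℝ) * Real.exp (-(125 * vk * L))) := by
            rw [sum_const, nsmul_eq_mul]
        _ ≤ ((n+1:ℕ) : ℝ) ^ (d + 1) * (5 * (n.choose T : ℝ) * Real.exp (-(125 * vk * L))) := by
            apply mul_le_mul_of_nonneg_right _ (by positivity)
            have := sauer hn Fk
            rw [← hd] at this
            exact_mod_cast this
        _ ≤ Real.exp (2 * vk * L) * (5 * (n.choose T : ℝ) * Real.exp (-(125 * vk * L))) := by
            apply mul_le_mul_of_nonneg_right _ (by positivity)
            have hx0 : (0:ℝ) < ((n+1:ℕ):ℝ) := by positivity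
            have hcast : (((n+1:ℕ)) : ℝ) ^ (d+1)
                = Real.exp (((d+1:ℕ):ℝ) * Real.log ((n:ℝ)+1)) := by
              have hx : ((n+1:ℕ):ℝ) = Real.exp (Real.log ((n:ℝ)+1)) := by
                rw [Real.exp_log (by positivity)]
                push_cast
                ring
              rw [hx, ← Real.exp_nat_mul]
            rw [hcast, Real.exp_le_exp]
            have hdvk : d ≤ vk := by
              rw [hvk, min_eq_left (le_of_lt hdk)]
              exact le_max_right _ _
            have hd1 : ((d+1:ℕ):ℝ) ≤ 2 * (vk:ℝ) := by
              have : d + 1 ≤ 2 * vk := by omega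
              exact_mod_cast this
            have hlog0 : 0 ≤ Real.log ((n:ℝ)+1) := Real.log_nonneg (by linarith)
            calc ((d+1:ℕ):ℝ) * Real.log ((n:ℝ)+1) ≤ (2*(vk:ℝ)) * L :=
                mul_le_mul hd1 hlogn1 hlog0 (by positivity)
              _ = 2 * vk * L := by ring
        _ = 5 * (n.choose T : ℝ) * Real.exp (-(123 * vk * L)) := by
            rw [show (-(123 * (vk:ℝ) * L)) = 2 * vk * L + -(125 * vk * L) by ring,
              Real.exp_add]
            ring
        _ ≤ 5 * (n.choose T : ℝ) * Real.exp (-(123 * L)) := by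
            apply mul_le_mul_of_nonneg_left _ (by positivity)
            rw [Real.exp_le_exp]
            have hvkR : (1:ℝ) ≤ (vk:ℝ) := by exact_mod_cast hvk1
            nlinarith [hL1]
    · -- deterministic case
      push_neg at hdk
      have hzero : ∀ Q ∈ Fk, ((BadP Q).card : ℝ) = 0 := by
        intro Q hQ
        rw [hBadPQ Q hQ]
        have hQk : Q.card = k := by
          rw [hFk, mem_filter] at hQ
          exact hQ.2
        have hkv : Q.card ≤ vk := by
          rw [hvk, hQk]
          rcases Nat.le_total k d with h | h
          · rw [min_eq_right hdk] at *
            exact le_max_right _ _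
          · rw [min_eq_right hdk]
            exact le_max_right _ _
        rw [per_pi_det hT hTn μ hμ Q vk L hL1 hkv]
        simp
      rw [sum_eq_zero hzero]
      positivity
  -- sum over k
  have htotal : ∑ k ∈ range (n+1), (5 * (n.choose T : ℝ) * Real.exp (-(123 * L)))
      ≤ δ * (n.choose T : ℝ) := by
    rw [sum_const, card_range, nsmul_eq_mul]
    have hexpL : Real.exp (-L) = δ / (Real.exp 1 * n) := by
      rw [hLdef, ← Real.log_inv, Real.exp_log (by positivity)]
      rw [inv_div]
    have h122 : Real.exp (-(123 * L)) ≤ Real.exp (-L) * Real.exp (-122) := by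
      rw [← Real.exp_add, Real.exp_le_exp]
      linarith [hL1]
    have hexp122 : Real.exp (-(122:ℝ)) ≤ 1/10 := by
      rw [Real.exp_neg]
      have h10 : (10:ℝ) ≤ Real.exp 122 := by
        have := Real.add_one_le_exp (122:ℝ)
        linarith
      calc (Real.exp 122)⁻¹ ≤ (10:ℝ)⁻¹ := inv_anti₀ (by norm_num) h10
        _ = 1/10 := by norm_num
    calc ((n+1:ℕ) : ℝ) * (5 * (n.choose T : ℝ) * Real.exp (-(123 * L)))
        ≤ ((n+1:ℕ) : ℝ) * (5 * (n.choose T : ℝ) * (Real.exp (-L) * Real.exp (-122))) := by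
          apply mul_le_mul_of_nonneg_left _ (by positivity)
          apply mul_le_mul_of_nonneg_left h122 (by positivity)
      _ = ((n+1:ℕ) : ℝ) * (5 * (n.choose T : ℝ) * (δ / (Real.exp 1 * n) * Real.exp (-122))) := by
          rw [hexpL]
      _ = (δ * (n.choose T : ℝ))
            * (((n+1:ℕ):ℝ) * 5 * Real.exp (-122) / (Real.exp 1 * (n:ℝ))) := by
          field_simp
      _ ≤ (δ * (n.choose T : ℝ)) * 1 := by
          apply mul_le_mul_of_nonneg_left _ (by positivity)
          rw [div_le_one (by positivity)]
          have hnn : ((n+1:ℕ):ℝ) = (n:ℝ) + 1 := by push_cast; ring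
          nlinarith [hexp122, hn1, he, Real.exp_pos (-(122:ℝ))]
      _ = δ * (n.choose T : ℝ) := mul_one _
  calc (((SS n T).filter _).card : ℝ) ≤ ∑ Q ∈ F, ((BadP Q).card : ℝ) := hstep1
    _ = _ := hfiber
    _ ≤ ∑ k ∈ range (n+1), (5 * (n.choose T : ℝ) * Real.exp (-(123 * L))) := sum_le_sum hperfiber
    _ ≤ δ * (n.choose T : ℝ) := htotal



lemma sum_swap_ind {n : ℕ} (μ : Fin n → ℝ) (S Q : Finset (Fin n)) :
    ∑ i ∈ S, μ i * (if i ∈ Q then (1:ℝ) else 0) = ∑ i ∈ Q, μ i * ind S i := by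
  classical
  have h1 : ∑ i ∈ S, μ i * (if i ∈ Q then (1:ℝ) else 0) = ∑ i ∈ S ∩ Q, μ i := by
    rw [← Finset.sum_filter_add_sum_filter_not S (fun i => i ∈ Q)]
    have e1 : ∑ i ∈ S.filter (fun i => i ∈ Q), μ i * (if i ∈ Q then (1:ℝ) else 0)
        = ∑ i ∈ S.filter (fun i => i ∈ Q), μ i := by
      apply sum_congr rfl
      intro i hi
      rw [mem_filter] at hi
      rw [if_pos hi.2, mul_one]
    have e2 : ∑ i ∈ S.filter (fun i => ¬ i ∈ Q), μ i * (if i ∈ Q then (1:ℝ) else 0) = 0 := by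
      apply sum_eq_zero
      intro i hi
      rw [mem_filter] at hi
      rw [if_neg hi.2, mul_zero]
    rw [e1, e2, add_zero, Finset.filter_mem_eq_inter]
  have h2 : ∑ i ∈ Q, μ i * ind S i = ∑ i ∈ Q ∩ S, μ i := by
    rw [← Finset.sum_filter_add_sum_filter_not Q (fun i => i ∈ S)]
    have e1 : ∑ i ∈ Q.filter (fun i => i ∈ S), μ i * ind S i
        = ∑ i ∈ Q.filter (fun i => i ∈ S), μ i := by
      apply sum_congr rfl
      intro i hi
      rw [mem_filter] at hi
      unfold ind
      rw [if_pos hi.2, mul_one]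
    have e2 : ∑ i ∈ Q.filter (fun i => ¬ i ∈ S), μ i * ind S i = 0 := by
      apply sum_eq_zero
      intro i hi
      rw [mem_filter] at hi
      unfold ind
      rw [if_neg hi.2, mul_zero]
    rw [e1, e2, add_zero, Finset.filter_mem_eq_inter]
  rw [h1, h2, Finset.inter_comm]

lemma card_inj_fun (T n : ℕ) :
    ((univ : Finset (Fin T → Fin n)).filter (fun f => Function.Injective f)).card
      = n.descFactorial T := by
  classical
  have h1 : ((univ : Finset (Fin T → Fin n)).filter (fun f => Function.Injective f)).card
      = Fintype.card {f : Fin T → Fin n // Function.Injective f} := by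
    rw [Fintype.card_subtype]
  rw [h1, Fintype.card_congr (Equiv.subtypeInjectiveEquivEmbedding (Fin T) (Fin n)),
    Fintype.card_embedding_eq, Fintype.card_fin, Fintype.card_fin]

theorem measure_part
    (Ω : Type) [MeasureSpace Ω] [IsProbabilityMeasure (ℙ : Measure Ω)]
    (n T : ℕ) (hT : 1 ≤ T) (hTn : T ≤ n)
    (ℱ : Finset (Finset (Fin n))) (μ : Fin n → ℝ)
    (hμ : ∀ i, μ i ∈ Set.Icc (-1 : ℝ) 1)
    (δ : ℝ) (hδ : δ ∈ Set.Ioo (0 : ℝ) 1)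
    (I : Fin T → Ω → Fin n)
    (hI : ∀ s, Measurable (I s))
    (hP : ∀ f : Fin T → Fin n, Function.Injective f →
      ℙ {ω | ∀ s, I s ω = f s} = ((n - T).factorial : ENNReal) / (n.factorial : ENNReal)) :
    1 - ENNReal.ofReal δ ≤
      ℙ {ω | ∀ π ∈ ℱ,
        |((n : ℝ) / T) * (∑ s, μ (I s ω) * (if I s ω ∈ π then (1 : ℝ) else 0))
            - ∑ i ∈ π, μ i|
          ≤ 2000 * (Real.sqrt ((π.card : ℝ) * n *
                  ((max 1 (min ((ℱ.filter fun ρ => ρ.card = π.card).vcDim) π.card) : ℕ) : ℝ) *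
                  Real.log (Real.exp 1 * n / δ) / T)
              + (n : ℝ) *
                  ((max 1 (min ((ℱ.filter fun ρ => ρ.card = π.card).vcDim) π.card) : ℕ) : ℝ) *
                  Real.log (Real.exp 1 * n / δ) / T)} := by
  classical
  obtain ⟨hδ0, hδ1⟩ := hδ
  set L : ℝ := Real.log (Real.exp 1 * n / δ) with hLdef
  set E : Set Ω := {ω | ∀ π ∈ ℱ,
        |((n : ℝ) / T) * (∑ s, μ (I s ω) * (if I s ω ∈ π then (1 : ℝ) else 0))
            - ∑ i ∈ π, μ i|
          ≤ 2000 * (Real.sqrt ((π.card : ℝ) * n *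
                  ((max 1 (min ((ℱ.filter fun ρ => ρ.card = π.card).vcDim) π.card) : ℕ) : ℝ) *
                  L / T)
              + (n : ℝ) *
                  ((max 1 (min ((ℱ.filter fun ρ => ρ.card = π.card).vcDim) π.card) : ℕ) : ℝ) *
                  L / T)} with hE
  set Bad : Finset (Finset (Fin n)) := (SS n T).filter (fun S => ∃ Q ∈ ℱ,
      Bnd T Q (max 1 (min ((ℱ.filter fun ρ => ρ.card = Q.card).vcDim) Q.card)) L
        < ErrF T μ S Q) with hBad
  set A : (Fin T → Fin n) → Set Ω := fun f => {ω | ∀ s, I s ω = f s} with hA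
  have hAmeas : ∀ f, MeasurableSet (A f) := by
    intro f
    have he : A f = ⋂ s, (I s) ⁻¹' {f s} := by
      ext ω
      simp [hA, Set.mem_iInter]
    rw [he]
    exact MeasurableSet.iInter (fun s => (hI s) (measurableSet_singleton _))
  have hdisj : Pairwise (Function.onFun Disjoint A) := by
    intro f g hfg
    rw [Function.onFun, Set.disjoint_left]
    intro ω hωf hωg
    apply hfg
    funext s
    rw [← hωf s, ← hωg s]
  have huniv : (⋃ f, A f) = Set.univ := by
    ext ω
    simp only [Set.mem_iUnion, Set.mem_univ, iff_true]
    exact ⟨fun s => I s ω, fun s => rfl⟩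
  have hsum : ∑ f : (Fin T → Fin n), ℙ (A f) = 1 := by
    rw [← tsum_fintype (L := .unconditional _), ← measure_iUnion hdisj hAmeas, huniv, measure_univ]
  set W : ENNReal := ((n - T).factorial : ENNReal) / (n.factorial : ENNReal) with hW
  set injs : Finset (Fin T → Fin n) :=
    (univ : Finset (Fin T → Fin n)).filter (fun f => Function.Injective f) with hinjs
  have hinjsum : ∑ f ∈ injs, ℙ (A f) = 1 := by
    have heach : ∀ f ∈ injs, ℙ (A f) = W := by
      intro f hf
      rw [hinjs, mem_filter] at hf
      exact hP f hf.2
    rw [Finset.sum_congr rfl heach, sum_const, nsmul_eq_mul]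
    rw [hinjs, card_inj_fun]
    have hfact : (n.descFactorial T) * (n - T).factorial = n.factorial := by
      rw [Nat.descFactorial_eq_factorial_mul_choose]
      have := Nat.choose_mul_factorial_mul_factorial hTn
      calc T.factorial * n.choose T * (n - T).factorial
          = n.choose T * T.factorial * (n - T).factorial := by ring
        _ = n.factorial := this
    rw [hW, ← mul_div_assoc]
    rw [show ((n.descFactorial T : ℕ) : ENNReal) * ((n - T).factorial : ENNReal)
        = ((n.factorial : ℕ) : ENNReal) by exact_mod_cast congrArg Nat.cast hfact]
    exact ENNReal.div_self (by exact_mod_cast Nat.factorial_pos n |>.ne')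
      (by exact ENNReal.natCast_ne_top _)
  have hnoninj : ∑ f ∈ (univ : Finset (Fin T → Fin n)).filter
      (fun f => ¬ Function.Injective f), ℙ (A f) = 0 := by
    have hsplit := Finset.sum_filter_add_sum_filter_not (univ : Finset (Fin T → Fin n))
      (fun f => Function.Injective f) (fun f => ℙ (A f))
    rw [hsum] at hsplit
    rw [← hinjs] at hsplit
    rw [hinjsum] at hsplit
    have h1 : (1 : ENNReal) ≠ ⊤ := ENNReal.one_ne_top
    nth_rewrite 2 [show (1:ENNReal) = 1 + 0 by rw [add_zero]] at hsplit
    exact (ENNReal.add_right_inj h1).1 hsplit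
  -- complement inclusion
  set badf : Finset (Fin T → Fin n) := injs.filter (fun f => (univ.image f) ∈ Bad) with hbadf
  have hEc : Eᶜ ⊆ (⋃ f ∈ badf, A f) ∪ (⋃ f ∈ (univ : Finset (Fin T → Fin n)).filter
      (fun f => ¬ Function.Injective f), A f) := by
    intro ω hω
    have hωA : ω ∈ A (fun s => I s ω) := fun s => rfl
    by_cases hinj : Function.Injective (fun s => I s ω)
    · left
      rw [Set.mem_iUnion₂]
      refine ⟨fun s => I s ω, ?_, hωA⟩
      rw [hbadf, mem_filter]
      constructor
      · rw [hinjs, mem_filter]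
        exact ⟨mem_univ _, hinj⟩
      · -- image is bad
        set S : Finset (Fin n) := univ.image (fun s => I s ω) with hS
        have hScard : S.card = T := by
          rw [hS, card_image_of_injective _ hinj, card_univ, Fintype.card_fin]
        have hSS : S ∈ SS n T := by
          rw [SS, mem_powersetCard]
          exact ⟨subset_univ _, hScard⟩
        rw [hBad, mem_filter]
        refine ⟨hSS, ?_⟩
        rw [hE] at hω
        simp only [Set.mem_compl_iff, Set.mem_setOf_eq, not_forall] at hω
        obtain ⟨Q, hQF, hQviol⟩ := hω
        refine ⟨Q, hQF, ?_⟩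
        rw [not_le] at hQviol
        have hsumeq : (∑ s, μ (I s ω) * (if I s ω ∈ Q then (1:ℝ) else 0))
            = ∑ i ∈ Q, μ i * ind S i := by
          rw [← sum_swap_ind μ S Q, hS, Finset.sum_image (fun a _ b _ h => hinj h)]
        unfold ErrF Bnd
        rw [← hsumeq]
        exact hQviol
    · right
      rw [Set.mem_iUnion₂]
      exact ⟨fun s => I s ω, by rw [mem_filter]; exact ⟨mem_univ _, hinj⟩, hωA⟩
  -- fiber counting
  have hbadfcard : badf.card ≤ Bad.card * T.factorial := by
    have hmaps : ∀ f ∈ badf, (univ.image f) ∈ Bad := by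
      intro f hf
      rw [hbadf, mem_filter] at hf
      exact hf.2
    rw [Finset.card_eq_sum_card_fiberwise hmaps]
    have hfiber : ∀ S ∈ Bad, (badf.filter (fun f => univ.image f = S)).card ≤ T.factorial := by
      intro S hSBad
      have hScard : S.card = T := by
        rw [hBad, mem_filter] at hSBad
        rw [SS, mem_powersetCard] at hSBad
        exact hSBad.1.2
      set e := S.orderIsoOfFin hScard with he
      set z : Fin T := ⟨0, hT⟩ with hz
      set φ : (Fin T → Fin n) → (Fin T → Fin T) := fun f s =>
        if h : f s ∈ S then e.symm ⟨f s, h⟩ else z with hφ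
      have hkey : (badf.filter (fun f => univ.image f = S)).card
          ≤ ((univ : Finset (Fin T → Fin T)).filter (fun g => Function.Injective g)).card := by
        apply Finset.card_le_card_of_injOn φ
        · intro f hf
          rw [mem_coe, mem_filter] at hf
          obtain ⟨hf1, hfS⟩ := hf
          have hfinj : Function.Injective f := by
            rw [hbadf, mem_filter, hinjs, mem_filter] at hf1
            exact hf1.1.2
          have hfmem : ∀ s, f s ∈ S := by
            intro s
            rw [← hfS]
            exact mem_image_of_mem f (mem_univ s)
          rw [mem_coe, mem_filter]
          refine ⟨mem_univ _, ?_⟩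
          intro s1 s2 hs
          rw [hφ] at hs
          simp only [hfmem s1, hfmem s2, dif_pos] at hs
          have := e.symm.injective hs
          have hv : f s1 = f s2 := congrArg Subtype.val this
          exact hfinj hv
        · intro f hf g hg hfg
          rw [mem_coe, mem_filter] at hf hg
          have hfmem : ∀ s, f s ∈ S := by
            intro s
            rw [← hf.2]
            exact mem_image_of_mem f (mem_univ s)
          have hgmem : ∀ s, g s ∈ S := by
            intro s
            rw [← hg.2]
            exact mem_image_of_mem g (mem_univ s)
          funext s
          have := congrFun hfg s
          rw [hφ] at this
          simp only [hfmem s, hgmem s, dif_pos] at this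
          have h2 := congrArg e this
          simp only [OrderIso.apply_symm_apply] at h2
          exact congrArg Subtype.val h2
      rw [card_inj_fun, Nat.descFactorial_self] at hkey
      exact hkey
    calc ∑ S ∈ Bad, (badf.filter (fun f => univ.image f = S)).card
        ≤ ∑ _S ∈ Bad, T.factorial := Finset.sum_le_sum hfiber
      _ = Bad.card * T.factorial := by rw [sum_const, smul_eq_mul]
  -- measure bound on the complement
  have hEcmeas : ℙ Eᶜ ≤ (badf.card : ENNReal) * W := by
    calc ℙ Eᶜ ≤ ℙ ((⋃ f ∈ badf, A f) ∪ (⋃ f ∈ (univ : Finset (Fin T → Fin n)).filter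
          (fun f => ¬ Function.Injective f), A f)) := measure_mono hEc
      _ ≤ ℙ (⋃ f ∈ badf, A f) + ℙ (⋃ f ∈ (univ : Finset (Fin T → Fin n)).filter
          (fun f => ¬ Function.Injective f), A f) := measure_union_le _ _
      _ ≤ (∑ f ∈ badf, ℙ (A f)) + (∑ f ∈ (univ : Finset (Fin T → Fin n)).filter
          (fun f => ¬ Function.Injective f), ℙ (A f)) := by
          exact add_le_add (measure_biUnion_finset_le _ _) (measure_biUnion_finset_le _ _)
      _ = (∑ f ∈ badf, ℙ (A f)) + 0 := by rw [hnoninj]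
      _ = ∑ f ∈ badf, ℙ (A f) := add_zero _
      _ = (badf.card : ENNReal) * W := by
          have heach : ∀ f ∈ badf, ℙ (A f) = W := by
            intro f hf
            rw [hbadf, mem_filter, hinjs, mem_filter] at hf
            exact hP f hf.1.2
          rw [Finset.sum_congr rfl heach, sum_const, nsmul_eq_mul]
  -- combine with counting bound
  have hcount : (Bad.card : ℝ) ≤ δ * (n.choose T : ℝ) := by
    have := global_bound hT hTn μ hμ ℱ δ hδ0 hδ1
    rw [hBad, hLdef]
    exact this
  have hfinal : ℙ Eᶜ ≤ ENNReal.ofReal δ := by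
    have hreal : (Bad.card : ℝ) * T.factorial * (n - T).factorial ≤ δ * n.factorial := by
      have h2 : (n.choose T : ℝ) * T.factorial * (n - T).factorial = n.factorial := by
        exact_mod_cast congrArg Nat.cast (Nat.choose_mul_factorial_mul_factorial hTn)
      calc (Bad.card : ℝ) * T.factorial * (n - T).factorial
          ≤ (δ * (n.choose T : ℝ)) * T.factorial * (n - T).factorial := by
            have hTf : (0:ℝ) ≤ (T.factorial : ℝ) := Nat.cast_nonneg _
            have hnTf : (0:ℝ) ≤ ((n-T).factorial : ℝ) := Nat.cast_nonneg _
            apply mul_le_mul_of_nonneg_right _ hnTf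
            apply mul_le_mul_of_nonneg_right hcount hTf
        _ = δ * ((n.choose T : ℝ) * T.factorial * (n - T).factorial) := by ring
        _ = δ * n.factorial := by rw [h2]
    calc ℙ Eᶜ ≤ (badf.card : ENNReal) * W := hEcmeas
      _ ≤ ((Bad.card * T.factorial : ℕ) : ENNReal) * W := by
          apply mul_le_mul_left _ W
          exact_mod_cast hbadfcard
      _ = ((Bad.card * T.factorial * (n-T).factorial : ℕ) : ENNReal) / (n.factorial : ENNReal) := by
          rw [hW, ← mul_div_assoc]
          congr 1
          push_cast
          ring
      _ ≤ ENNReal.ofReal δ := by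
          rw [ENNReal.div_le_iff (by exact_mod_cast (Nat.factorial_pos n).ne')
            (ENNReal.natCast_ne_top _)]
          calc ((Bad.card * T.factorial * (n-T).factorial : ℕ) : ENNReal)
              = ENNReal.ofReal ((Bad.card * T.factorial * (n-T).factorial : ℕ) : ℝ) := by
                rw [ENNReal.ofReal_natCast]
            _ ≤ ENNReal.ofReal (δ * n.factorial) := by
                apply ENNReal.ofReal_le_ofReal
                push_cast
                push_cast at hreal
                linarith
            _ = ENNReal.ofReal δ * (n.factorial : ENNReal) := by
                rw [ENNReal.ofReal_mul (le_of_lt hδ0), ENNReal.ofReal_natCast]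
  -- conclude
  have hsplit : (1 : ENNReal) ≤ ℙ E + ℙ Eᶜ := by
    calc (1 : ENNReal) = ℙ (Set.univ : Set Ω) := (measure_univ).symm
      _ = ℙ (E ∪ Eᶜ) := by rw [Set.union_compl_self]
      _ ≤ ℙ E + ℙ Eᶜ := measure_union_le _ _
  rw [tsub_le_iff_right]
  calc (1 : ENNReal) ≤ ℙ E + ℙ Eᶜ := hsplit
    _ ≤ ℙ E + ENNReal.ofReal δ := add_le_add le_rfl hfinal

end Stmt8Aux

/-- There is a universal constant `c > 0` such that, in the
persistent-noise setting where indices `I_1,…,I_T` are sampled uniformly at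
random without replacement from `[n]` (i.e. each injective tuple has
probability `(n−T)!/n!`) and observing index `i` reveals the deterministic
value `μ_i ∈ [−1,1]`, with probability at least `1 − δ`, simultaneously for all
`π ∈ ℱ`, `|μ̂_π − μ_π| ≤ c(√(|π|·n·Ṽ_π·ln(en/δ)/T) + n·Ṽ_π·ln(en/δ)/T)` where
`μ̂_π := (n/T)Σ_s μ_{I_s}·1{I_s ∈ π}` and `Ṽ_π := max{1, min{VC(B₁(|π|)), |π|}}`. -/
theorem stmt8 :
    ∃ c : ℝ, 0 < c ∧
      ∀ (Ω : Type) [MeasureSpace Ω] [IsProbabilityMeasure (ℙ : Measure Ω)]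
        (n T : ℕ), 1 ≤ T → T ≤ n →
        ∀ (ℱ : Finset (Finset (Fin n))) (μ : Fin n → ℝ),
        (∀ i, μ i ∈ Set.Icc (-1 : ℝ) 1) →
        ∀ δ : ℝ, δ ∈ Set.Ioo (0 : ℝ) 1 →
        ∀ I : Fin T → Ω → Fin n,
        (∀ s, Measurable (I s)) →
        (∀ f : Fin T → Fin n, Function.Injective f →
          ℙ {ω | ∀ s, I s ω = f s} = ((n - T).factorial : ENNReal) / (n.factorial : ENNReal)) →
        1 - ENNReal.ofReal δ ≤
          ℙ {ω | ∀ π ∈ ℱ,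
            |((n : ℝ) / T) * (∑ s, μ (I s ω) * (if I s ω ∈ π then (1 : ℝ) else 0))
                - ∑ i ∈ π, μ i|
              ≤ c * (Real.sqrt ((π.card : ℝ) * n *
                      ((max 1 (min ((ℱ.filter fun ρ => ρ.card = π.card).vcDim) π.card) : ℕ) : ℝ) *
                      Real.log (Real.exp 1 * n / δ) / T)
                  + (n : ℝ) *
                      ((max 1 (min ((ℱ.filter fun ρ => ρ.card = π.card).vcDim) π.card) : ℕ) : ℝ) *
                      Real.log (Real.exp 1 * n / δ) / T)} := by
  refine ⟨2000, by norm_num, ?_⟩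
  intro Ω _inst1 _inst2 n T hT hTn ℱ μ hμ δ hδ I hI hP
  exact Stmt8Aux.measure_part Ω n T hT hTn ℱ μ hμ δ hδ I hI hP
end
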